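/- arXiv:2406.15882 — 3 statements merged into one kernel-verified Lean document; each statement's English description precedes it below -/
import Mathlib

section
/- Let Σ be a monoidal signature, let Z be a discrete e-hypergraph, and let f : Z → X and g : Z → Y be e-hypergraph homomorphisms such that: (i) any two vertices v_i, v_j of Z satisfy [f(v_i)) = [f(v_j)) and [g(v_i)) = [g(v_j)), where [x) denotes the set of parents of x; (ii) for every vertex v of Z, if [f(v)) ≠ ∅ then [g(v)) = ∅, and if [g(v)) ≠ ∅ then [f(v)) = ∅; (iii) any two vertices v_i, v_j of Z satisfy ⌣(f(v_i)) = ⌣(f(v_j)) and ⌣(g(v_i)) = ⌣(g(v_j)), where ⌣(x) denotes the consistency class of x. Then the pushout X +_{f,g} Y of the span Y ← Z → X exists in EHyp(Σ). -/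
open CategoryTheory

/-- A monoidal signature: a set of generators, each with an arity and a co-arity. -/
structure MSig : Type 1 where
  Gen : Type
  ar : Gen → ℕ
  coar : Gen → ℕ

variable (σ : MSig)

/-- An e-hypergraph over a monoidal signature `σ`: a finite hypergraph whose edges are
labelled by generators or by `⊥` (hierarchical edges, encoded by `none`), equipped with a
hierarchy (child) structure given by an immediate-parent function into hierarchical edges,
and a consistency relation partitioning the children of every hierarchical edge. -/
structure EHyp : Type 1 where
  V : Type
  E : Type
  [fintV : Fintype V]
  [fintE : Fintype E]
  src : E → List V
  tgt : E → List V
  lbl : E → Option σ.Gen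
  /-- the immediate parent (a hierarchical edge) of a vertex or edge, if any -/
  parent : V ⊕ E → Option E
  /-- the consistency relation -/
  cons : V ⊕ E → V ⊕ E → Prop
  lbl_ar : ∀ (e : E) (g : σ.Gen), lbl e = some g →
    (src e).length = σ.ar g ∧ (tgt e).length = σ.coar g
  /-- parents are hierarchical edges -/
  parent_hier : ∀ x e, parent x = some e → lbl e = none
  /-- the child relation is a strict partial order (no parent cycles) -/
  acyclic_parent : ∀ x : V ⊕ E,
    ¬ Relation.TransGen (fun a b : V ⊕ E => ∃ e, a = Sum.inr e ∧ parent b = some e) x x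
  /-- the child relation respects connectivity -/
  parent_conn : ∀ (e : E) (v : V), (v ∈ src e ∨ v ∈ tgt e) →
    parent (Sum.inl v) = parent (Sum.inr e)
  /-- maximal edges (edges which are nobody's parent) are labelled -/
  maximal_lbl : ∀ e : E, (∀ x, parent x ≠ some e) → lbl e ≠ none
  cons_symm : ∀ {x y}, cons x y → cons y x
  cons_trans : ∀ {x y z}, cons x y → cons y z → cons x z
  /-- consistent elements share an immediate parent -/
  cons_parent : ∀ {x y}, cons x y → ∃ e, parent x = some e ∧ parent y = some e
  cons_refl : ∀ x e, parent x = some e → cons x x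
  /-- the consistency relation is closed under connectivity -/
  cons_conn : ∀ (e : E) (v : V), (v ∈ src e ∨ v ∈ tgt e) →
    (∃ p, parent (Sum.inl v) = some p) → cons (Sum.inl v) (Sum.inr e)
  /-- no consistency class is the total relation on the children of an edge -/
  cons_nontotal : ∀ e : E, (∃ x, parent x = some e) →
    ∃ x y, parent x = some e ∧ parent y = some e ∧ ¬ cons x y

attribute [instance] EHyp.fintV EHyp.fintE

namespace EHyp

variable {σ}

/-- The ancestor relation generated by the immediate-parent function
(the strict partial order `<` of the paper, read as "is an ancestor of"). -/
def anc (G : EHyp σ) : (G.V ⊕ G.E) → (G.V ⊕ G.E) → Prop :=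
  Relation.TransGen (fun a b => ∃ e, a = Sum.inr e ∧ G.parent b = some e)

/-- Top-level elements have no parent. -/
def TopLevel (G : EHyp σ) (x : G.V ⊕ G.E) : Prop := G.parent x = none

/-- An edge is hierarchical if it is labelled `⊥`. -/
def Hier (G : EHyp σ) (e : G.E) : Prop := G.lbl e = none

end EHyp

/-- A homomorphism of e-hypergraphs: a hypergraph homomorphism which preserves labels,
immediate parents and the consistency relation. -/
structure EHypHom (G H : EHyp σ) : Type where
  onV : G.V → H.V
  onE : G.E → H.E
  map_src : ∀ e, H.src (onE e) = (G.src e).map onV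
  map_tgt : ∀ e, H.tgt (onE e) = (G.tgt e).map onV
  map_lbl : ∀ e, H.lbl (onE e) = G.lbl e
  map_parent : ∀ x e, G.parent x = some e →
    H.parent (Sum.map onV onE x) = some (onE e)
  map_cons : ∀ x y, G.cons x y → H.cons (Sum.map onV onE x) (Sum.map onV onE y)

theorem EHypHom.ext' {σ : MSig} {G H : EHyp σ} {f g : EHypHom σ G H}
    (h1 : f.onV = g.onV) (h2 : f.onE = g.onE) : f = g := by
  cases f; cases g; cases h1; cases h2; rfl

/-- The category of e-hypergraphs over `σ` and their homomorphisms. -/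
instance EHyp.category : Category (EHyp σ) where
  Hom G H := EHypHom σ G H
  id G :=
    { onV := id, onE := id
      map_src := by simp
      map_tgt := by simp
      map_lbl := fun _ => rfl
      map_parent := by intro x e h; cases x <;> simpa using h
      map_cons := by intro x y h; cases x <;> cases y <;> simpa using h }
  comp {G H K} f g :=
    { onV := g.onV ∘ f.onV, onE := g.onE ∘ f.onE
      map_src := by intro e; simp [g.map_src, f.map_src]
      map_tgt := by intro e; simp [g.map_tgt, f.map_tgt]
      map_lbl := by intro e; simp [g.map_lbl, f.map_lbl]
      map_parent := by
        intro x e h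
        have h1 := f.map_parent x e h
        have h2 := g.map_parent _ _ h1
        cases x <;> simpa using h2
      map_cons := by
        intro x y h
        have h2 := g.map_cons _ _ (f.map_cons x y h)
        cases x <;> cases y <;> simpa using h2 }
  id_comp := by intro G H f; apply EHypHom.ext' <;> rfl
  comp_id := by intro G H f; apply EHypHom.ext' <;> rfl
  assoc := by intro G H K L f g h; apply EHypHom.ext' <;> rfl

namespace EPush

open CategoryTheory Relation

variable {σ : MSig}

/-- The single parent step relation (same as in `EHyp.anc`). -/
def pstep (G : EHyp σ) : (G.V ⊕ G.E) → (G.V ⊕ G.E) → Prop :=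
  fun a b => ∃ e, a = Sum.inr e ∧ G.parent b = some e

lemma anc_def (G : EHyp σ) : G.anc = Relation.TransGen (pstep G) := rfl

lemma anc_of_parent (G : EHyp σ) {a : G.V ⊕ G.E} {e : G.E}
    (h : G.parent a = some e) : G.anc (Sum.inr e) a :=
  Relation.TransGen.single ⟨e, rfl, h⟩

lemma parent_eq_of_anc_iff (G : EHyp σ) {a b : G.V ⊕ G.E}
    (h : ∀ x, G.anc x a ↔ G.anc x b) : G.parent a = G.parent b := by
  have key : ∀ {d : G.V ⊕ G.E} {e e' : G.E}, G.parent d = some e' →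
      G.anc (Sum.inr e) d →
      Relation.ReflTransGen (pstep G) (Sum.inr e) (Sum.inr e' : G.V ⊕ G.E) := by
    intro d e e' hd hanc
    obtain ⟨m, hm1, hm2⟩ := Relation.TransGen.tail'_iff.mp hanc
    obtain ⟨e0, rfl, he0⟩ := hm2
    rw [hd] at he0
    injection he0 with he0
    rw [he0]
    exact hm1
  cases ha : G.parent a with
  | none =>
    cases hb : G.parent b with
    | none => rfl
    | some e =>
      exfalso
      have := (h (Sum.inr e)).mpr (anc_of_parent G hb)
      obtain ⟨m, _, hm2⟩ := Relation.TransGen.tail'_iff.mp this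
      obtain ⟨e0, rfl, he0⟩ := hm2
      rw [ha] at he0
      cases he0
  | some e =>
    cases hb : G.parent b with
    | none =>
      exfalso
      have := (h (Sum.inr e)).mp (anc_of_parent G ha)
      obtain ⟨m, _, hm2⟩ := Relation.TransGen.tail'_iff.mp this
      obtain ⟨e0, rfl, he0⟩ := hm2
      rw [hb] at he0
      cases he0
    | some e' =>
      have h1 : Relation.ReflTransGen (pstep G) (Sum.inr e) (Sum.inr e' : G.V ⊕ G.E) :=
        key hb ((h _).mp (anc_of_parent G ha))
      have h2 : Relation.ReflTransGen (pstep G) (Sum.inr e') (Sum.inr e : G.V ⊕ G.E) :=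
        key ha ((h _).mpr (anc_of_parent G hb))
      rcases Relation.reflTransGen_iff_eq_or_transGen.mp h1 with heq | ht1
      · injection heq with heq; rw [heq]
      · rcases Relation.reflTransGen_iff_eq_or_transGen.mp h2 with heq | ht2
        · injection heq with heq; rw [heq]
        · exact absurd (ht1.trans ht2) (G.acyclic_parent _)

/-- Incidence (connectivity) relation between vertices and edges of `G`, symmetrised. -/
def inc (G : EHyp σ) : (G.V ⊕ G.E) → (G.V ⊕ G.E) → Prop :=
  fun a b =>
    (∃ v e, a = Sum.inl v ∧ b = Sum.inr e ∧ (v ∈ G.src e ∨ v ∈ G.tgt e)) ∨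
    (∃ v e, b = Sum.inl v ∧ a = Sum.inr e ∧ (v ∈ G.src e ∨ v ∈ G.tgt e))

lemma inc_symm (G : EHyp σ) {a b} (h : inc G a b) : inc G b a := h.symm

lemma parent_eq_of_inc (G : EHyp σ) {a b} (h : inc G a b) :
    G.parent a = G.parent b := by
  rcases h with ⟨v, e, rfl, rfl, hm⟩ | ⟨v, e, rfl, rfl, hm⟩
  · exact G.parent_conn e v hm
  · exact (G.parent_conn e v hm).symm

/-- The asymmetric setting for the auxiliary pushout construction: the images of the
vertices of `Z` in `Y` are all top-level. -/
structure Setting (σ : MSig) where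
  Z : EHyp σ
  X : EHyp σ
  Y : EHyp σ
  f : Z ⟶ X
  g : Z ⟶ Y
  hE : IsEmpty Z.E
  hext : ∀ v, Y.parent (Sum.inl (g.onV v)) = none
  hanc : ∀ v w x, X.anc x (Sum.inl (f.onV v)) ↔ X.anc x (Sum.inl (f.onV w))
  hcons : ∀ v w x, X.cons (Sum.inl (f.onV v)) x ↔ X.cons (Sum.inl (f.onV w)) x

namespace Setting

variable (S : Setting σ)

/-- The gluing relation on vertices. -/
def r : (S.X.V ⊕ S.Y.V) → (S.X.V ⊕ S.Y.V) → Prop :=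
  fun a b => ∃ v, a = Sum.inl (S.f.onV v) ∧ b = Sum.inr (S.g.onV v)

/-- Vertices of the pushout. -/
def PV : Type := Quot S.r

/-- Edges of the pushout. -/
def PE : Type := S.X.E ⊕ S.Y.E

def qk : (S.X.V ⊕ S.Y.V) → S.PV := Quot.mk S.r

/-- The elements of `Y` reachable by incidence from an image of a vertex of `Z`. -/
def TY : Set (S.Y.V ⊕ S.Y.E) :=
  {c | ∃ v, Relation.ReflTransGen (inc S.Y) (Sum.inl (S.g.onV v)) c}

open Classical in
/-- The common parent in `X` of the images of the vertices of `Z`. -/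
noncomputable def pX : Option S.X.E :=
  if h : Nonempty S.Z.V then S.X.parent (Sum.inl (S.f.onV h.some)) else none

lemma pX_spec (v : S.Z.V) : S.X.parent (Sum.inl (S.f.onV v)) = S.pX := by
  rw [pX, dif_pos ⟨v⟩]
  exact parent_eq_of_anc_iff S.X (S.hanc v (Nonempty.some ⟨v⟩))

lemma TY_toplevel {c} (hc : c ∈ S.TY) : S.Y.parent c = none := by
  obtain ⟨v, hv⟩ := hc
  induction hv with
  | refl => exact S.hext v
  | tail _ hstep ih => rw [← parent_eq_of_inc S.Y hstep, ih]

lemma TY_inc {c d} (hc : c ∈ S.TY) (h : inc S.Y c d) : d ∈ S.TY := by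
  obtain ⟨v, hv⟩ := hc
  exact ⟨v, hv.tail h⟩

lemma mem_TY_of_g (v : S.Z.V) : (Sum.inl (S.g.onV v) : S.Y.V ⊕ S.Y.E) ∈ S.TY :=
  ⟨v, Relation.ReflTransGen.refl⟩

open Classical in
/-- The parent assignment for `Y`-elements of the pushout. -/
noncomputable def hYel : (S.Y.V ⊕ S.Y.E) → Option S.PE := fun c =>
  match S.Y.parent c with
  | some e => some (Sum.inr e)
  | none => if c ∈ S.TY then S.pX.map Sum.inl else none

/-- The parent assignment for `X`-elements of the pushout. -/
def hXel : (S.X.V ⊕ S.X.E) → Option S.PE := fun c => (S.X.parent c).map Sum.inl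

lemma hv_compat : ∀ a b, S.r a b →
    (Sum.elim (fun x => S.hXel (Sum.inl x)) (fun y => S.hYel (Sum.inl y))) a =
    (Sum.elim (fun x => S.hXel (Sum.inl x)) (fun y => S.hYel (Sum.inl y))) b := by
  rintro _ _ ⟨v, rfl, rfl⟩
  simp only [Sum.elim_inl, Sum.elim_inr, hXel, hYel, S.pX_spec v, S.hext v]
  rw [if_pos (S.mem_TY_of_g v)]

/-- The parent function of the pushout. -/
noncomputable def Pparent : (S.PV ⊕ S.PE) → Option S.PE :=
  Sum.elim
    (Quot.lift (Sum.elim (fun x => S.hXel (Sum.inl x)) (fun y => S.hYel (Sum.inl y)))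
      S.hv_compat)
    (Sum.elim (fun e => S.hXel (Sum.inr e)) (fun e => S.hYel (Sum.inr e)))

/-- Inclusion of `X`-elements into the pushout carrier. -/
def iX : (S.X.V ⊕ S.X.E) → (S.PV ⊕ S.PE) :=
  Sum.map (fun x => S.qk (Sum.inl x)) Sum.inl

/-- Inclusion of `Y`-elements into the pushout carrier. -/
def iY : (S.Y.V ⊕ S.Y.E) → (S.PV ⊕ S.PE) :=
  Sum.map (fun y => S.qk (Sum.inr y)) Sum.inr

lemma Pparent_iX (c : S.X.V ⊕ S.X.E) : S.Pparent (S.iX c) = S.hXel c := by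
  cases c <;> rfl

lemma Pparent_iY (c : S.Y.V ⊕ S.Y.E) : S.Pparent (S.iY c) = S.hYel c := by
  cases c <;> rfl

/-- The consistency class in `X` of the images of the vertices of `Z`. -/
def AX : Set (S.X.V ⊕ S.X.E) := {c | ∃ v, S.X.cons (Sum.inl (S.f.onV v)) c}

/-- The merged consistency class. -/
def M : Set (S.PV ⊕ S.PE) := (S.iY '' S.TY) ∪ (S.iX '' S.AX)

/-- The consistency relation of the pushout. -/
def Pcons : (S.PV ⊕ S.PE) → (S.PV ⊕ S.PE) → Prop := fun a b =>
  (∃ x y, S.X.cons x y ∧ a = S.iX x ∧ b = S.iX y) ∨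
  (∃ x y, S.Y.cons x y ∧ a = S.iY x ∧ b = S.iY y) ∨
  ((∃ e, S.pX = some e) ∧ a ∈ S.M ∧ b ∈ S.M)

end Setting

end EPush
namespace EPush
namespace Setting

variable {σ : MSig} (S : Setting σ)

lemma qk_eq {a b : S.X.V ⊕ S.Y.V} (h : S.qk a = S.qk b) :
    a = b ∨ ((∃ v, a = Sum.inl (S.f.onV v) ∨ a = Sum.inr (S.g.onV v)) ∧
             (∃ w, b = Sum.inl (S.f.onV w) ∨ b = Sum.inr (S.g.onV w))) := by
  have h' := Quot.eq.mp h
  clear h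
  induction h' with
  | rel a b hab =>
    obtain ⟨v, rfl, rfl⟩ := hab
    exact Or.inr ⟨⟨v, Or.inl rfl⟩, ⟨v, Or.inr rfl⟩⟩
  | refl a => exact Or.inl rfl
  | symm a b _ ih =>
    rcases ih with rfl | ⟨h1, h2⟩
    · exact Or.inl rfl
    · exact Or.inr ⟨h2, h1⟩
  | trans a b c _ _ ih1 ih2 =>
    rcases ih1 with rfl | ⟨h1, h2⟩
    · exact ih2
    · rcases ih2 with rfl | ⟨h3, h4⟩
      · exact Or.inr ⟨h1, h2⟩
      · exact Or.inr ⟨h1, h4⟩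

lemma iX_iX {c d : S.X.V ⊕ S.X.E} (h : S.iX c = S.iX d) :
    c = d ∨ ∃ v w, c = Sum.inl (S.f.onV v) ∧ d = Sum.inl (S.f.onV w) := by
  rcases c with x | e <;> rcases d with x' | e' <;> simp only [iX, Sum.map_inl, Sum.map_inr] at h
  · injection h with h
    rcases S.qk_eq h with h | ⟨⟨v, hv | hv⟩, ⟨w, hw | hw⟩⟩
    · exact Or.inl (congrArg Sum.inl (Sum.inl.inj h))
    · exact Or.inr ⟨v, w, congrArg Sum.inl (Sum.inl.inj hv), congrArg Sum.inl (Sum.inl.inj hw)⟩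
    · simp at hw
    · simp at hv
    · simp at hv
  · exact absurd h (by intro hh; cases hh)
  · exact absurd h (by intro hh; cases hh)
  · exact Or.inl (congrArg Sum.inr (Sum.inl.inj (Sum.inr.inj h)))

lemma iX_iY {c : S.X.V ⊕ S.X.E} {d : S.Y.V ⊕ S.Y.E} (h : S.iX c = S.iY d) :
    ∃ v w, c = Sum.inl (S.f.onV v) ∧ d = Sum.inl (S.g.onV w) := by
  rcases c with x | e <;> rcases d with y | e' <;>
    simp only [iX, iY, Sum.map_inl, Sum.map_inr] at h
  · injection h with h
    rcases S.qk_eq h with h | ⟨⟨v, hv | hv⟩, ⟨w, hw | hw⟩⟩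
    · simp at h
    · simp at hw
    · exact ⟨v, w, congrArg Sum.inl (Sum.inl.inj hv), congrArg Sum.inl (Sum.inr.inj hw)⟩
    · simp at hv
    · simp at hv
  · exact absurd h (by intro hh; cases hh)
  · exact absurd h (by intro hh; cases hh)
  · exact absurd h (by intro hh; cases hh)

lemma iY_iY {c d : S.Y.V ⊕ S.Y.E} (h : S.iY c = S.iY d) :
    c = d ∨ ∃ v w, c = Sum.inl (S.g.onV v) ∧ d = Sum.inl (S.g.onV w) := by
  rcases c with y | e <;> rcases d with y' | e' <;> simp only [iY, Sum.map_inl, Sum.map_inr] at h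
  · injection h with h
    rcases S.qk_eq h with h | ⟨⟨v, hv | hv⟩, ⟨w, hw | hw⟩⟩
    · exact Or.inl (congrArg Sum.inl (Sum.inr.inj h))
    · simp at hv
    · simp at hv
    · simp at hw
    · exact Or.inr ⟨v, w, congrArg Sum.inl (Sum.inr.inj hv), congrArg Sum.inl (Sum.inr.inj hw)⟩
  · exact absurd h (by intro hh; cases hh)
  · exact absurd h (by intro hh; cases hh)
  · exact Or.inl (congrArg Sum.inr (Sum.inr.inj (Sum.inr.inj h)))

lemma rep (p : S.PV ⊕ S.PE) : (∃ c, p = S.iX c) ∨ (∃ c, p = S.iY c) := by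
  rcases p with q | e
  · induction q using Quot.ind with
    | _ c =>
      rcases c with x | y
      · exact Or.inl ⟨Sum.inl x, rfl⟩
      · exact Or.inr ⟨Sum.inl y, rfl⟩
  · rcases e with e | e
    · exact Or.inl ⟨Sum.inr e, rfl⟩
    · exact Or.inr ⟨Sum.inr e, rfl⟩

lemma hXel_eq (c : S.X.V ⊕ S.X.E) : S.hXel c = (S.X.parent c).map Sum.inl := rfl

lemma hYel_of_parent {c : S.Y.V ⊕ S.Y.E} {e} (h : S.Y.parent c = some e) :
    S.hYel c = some (Sum.inr e) := by
  unfold hYel; rw [h]; rfl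

lemma hYel_of_TY {c : S.Y.V ⊕ S.Y.E} (hc : c ∈ S.TY) :
    S.hYel c = S.pX.map Sum.inl := by
  unfold hYel; rw [S.TY_toplevel hc, if_pos hc]; rfl

lemma hYel_eq_some {c : S.Y.V ⊕ S.Y.E} {pe} (h : S.hYel c = some pe) :
    (∃ e, pe = Sum.inr e ∧ S.Y.parent c = some e) ∨
    (∃ e, pe = Sum.inl e ∧ S.pX = some e ∧ S.Y.parent c = none ∧ c ∈ S.TY) := by
  unfold hYel at h
  cases hy : S.Y.parent c with
  | some e =>
    rw [hy] at h
    exact Or.inl ⟨e, (Option.some.inj h).symm, rfl⟩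
  | none =>
    rw [hy] at h
    split_ifs at h with ht
    · obtain ⟨e, he, rfl⟩ := Option.map_eq_some_iff.mp h
      exact Or.inr ⟨e, rfl, he, rfl, ht⟩

lemma not_Ycons_g (v : S.Z.V) {d} : ¬ S.Y.cons (Sum.inl (S.g.onV v)) d := by
  intro h
  obtain ⟨e, h1, _⟩ := S.Y.cons_parent h
  rw [S.hext v] at h1
  cases h1

lemma not_Ycons_TY {t d} (ht : t ∈ S.TY) : ¬ S.Y.cons t d := by
  intro h
  obtain ⟨e, h1, _⟩ := S.Y.cons_parent h
  rw [S.TY_toplevel ht] at h1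
  cases h1

lemma AX_trans {c d} (hc : c ∈ S.AX) (h : S.X.cons c d) : d ∈ S.AX := by
  obtain ⟨v, hv⟩ := hc
  exact ⟨v, S.X.cons_trans hv h⟩

lemma AX_pX {c} (hc : c ∈ S.AX) : ∃ e, S.pX = some e := by
  obtain ⟨v, hv⟩ := hc
  obtain ⟨e, h1, _⟩ := S.X.cons_parent hv
  exact ⟨e, (S.pX_spec v) ▸ h1⟩

lemma Xcons_transfer {v w : S.Z.V} {d} (h : S.X.cons d (Sum.inl (S.f.onV v))) :
    S.X.cons d (Sum.inl (S.f.onV w)) :=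
  S.X.cons_symm ((S.hcons v w d).mp (S.X.cons_symm h))

lemma M_parent {e} (he : S.pX = some e) {c} (hc : c ∈ S.M) :
    S.Pparent c = some (Sum.inl e) := by
  rcases hc with ⟨t, ht, rfl⟩ | ⟨x, hx, rfl⟩
  · rw [S.Pparent_iY, S.hYel_of_TY ht, he]; rfl
  · obtain ⟨v, hv⟩ := hx
    obtain ⟨e', p1, p2⟩ := S.X.cons_parent hv
    rw [S.pX_spec v, he] at p1
    injection p1 with p1
    rw [S.Pparent_iX, S.hXel_eq, p2, ← p1]
    rfl

end Setting
end EPush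
namespace EPush
namespace Setting

variable {σ : MSig} (S : Setting σ)

lemma Pcons_symm {a b} (h : S.Pcons a b) : S.Pcons b a := by
  rcases h with ⟨x, y, hc, ha, hb⟩ | ⟨x, y, hc, ha, hb⟩ | ⟨hp, ha, hb⟩
  · exact Or.inl ⟨y, x, S.X.cons_symm hc, hb, ha⟩
  · exact Or.inr (Or.inl ⟨y, x, S.Y.cons_symm hc, hb, ha⟩)
  · exact Or.inr (Or.inr ⟨hp, hb, ha⟩)

lemma Pcons_trans {a b c} (h1 : S.Pcons a b) (h2 : S.Pcons b c) : S.Pcons a c := by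
  rcases h1 with ⟨x1, x2, hc1, rfl, hb⟩ | ⟨y1, y2, hc1, rfl, hb⟩ | ⟨hp, haM, hbM⟩
  · -- first from X
    rcases h2 with ⟨x3, x4, hc2, hb', rfl⟩ | ⟨y3, y4, hc2, hb', rfl⟩ | ⟨hp, hbM, hcM⟩
    · -- X, X
      rcases S.iX_iX (hb ▸ hb') with rfl | ⟨v, w, rfl, rfl⟩
      · exact Or.inl ⟨x1, x4, S.X.cons_trans hc1 hc2, rfl, rfl⟩
      · exact Or.inl ⟨x1, x4, S.X.cons_trans (S.Xcons_transfer hc1) hc2, rfl, rfl⟩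
    · -- X, Y : impossible
      obtain ⟨v, w, _, rfl⟩ := S.iX_iY (hb ▸ hb')
      exact absurd hc2 (S.not_Ycons_g w)
    · -- X, M : a joins M
      refine Or.inr (Or.inr ⟨hp, ?_, hcM⟩)
      rcases hbM with ⟨t, ht, hbt⟩ | ⟨x'', hx'', hbx⟩
      · obtain ⟨v, w, hx2, _⟩ := S.iX_iY ((hb ▸ hbt).symm)
        exact Or.inr ⟨x1, ⟨v, S.X.cons_symm (hx2 ▸ hc1)⟩, rfl⟩
      · rcases S.iX_iX (hb ▸ hbx.symm) with rfl | ⟨v, w, rfl, _⟩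
        · exact Or.inr ⟨x1, S.AX_trans hx'' (S.X.cons_symm hc1), rfl⟩
        · exact Or.inr ⟨x1, ⟨v, S.X.cons_symm hc1⟩, rfl⟩
  · -- first from Y
    rcases h2 with ⟨x3, x4, hc2, hb', rfl⟩ | ⟨y3, y4, hc2, hb', rfl⟩ | ⟨hp, hbM, hcM⟩
    · -- Y, X : impossible
      obtain ⟨v, w, _, hy2⟩ := S.iX_iY (hb'.symm.trans hb)
      exact absurd (hy2 ▸ hc1) (fun hh => S.not_Ycons_g w (S.Y.cons_symm hh))
    · -- Y, Y
      rcases S.iY_iY (hb ▸ hb') with rfl | ⟨v, w, rfl, _⟩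
      · exact Or.inr (Or.inl ⟨y1, y4, S.Y.cons_trans hc1 hc2, rfl, rfl⟩)
      · exact absurd hc1 (fun hh => S.not_Ycons_g v (S.Y.cons_symm hh))
    · -- Y, M : impossible since y2 would be in TY or a g-image
      exfalso
      rcases hbM with ⟨t, ht, hbt⟩ | ⟨x'', hx'', hbx⟩
      · rcases S.iY_iY (hb ▸ hbt.symm) with rfl | ⟨v, w, rfl, _⟩
        · exact S.not_Ycons_TY ht (S.Y.cons_symm hc1)
        · exact S.not_Ycons_g v (S.Y.cons_symm hc1)
      · obtain ⟨v, w, _, hy2⟩ := S.iX_iY (hbx ▸ hb.symm).symm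
        exact S.not_Ycons_g w (S.Y.cons_symm (hy2 ▸ hc1))
  · -- first from M
    rcases h2 with ⟨x3, x4, hc2, hb', rfl⟩ | ⟨y3, y4, hc2, hb', rfl⟩ | ⟨hp', hbM', hcM⟩
    · -- M, X : c joins M
      refine Or.inr (Or.inr ⟨hp, haM, ?_⟩)
      rcases hbM with ⟨t, ht, hbt⟩ | ⟨x'', hx'', hbx⟩
      · obtain ⟨v, w, hx3, _⟩ := S.iX_iY (hbt.trans hb').symm
        exact Or.inr ⟨x4, ⟨v, hx3 ▸ hc2⟩, rfl⟩
      · rcases S.iX_iX (hb'.symm.trans hbx.symm) with rfl | ⟨v, w, rfl, _⟩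
        · exact Or.inr ⟨x4, S.AX_trans hx'' hc2, rfl⟩
        · exact Or.inr ⟨x4, ⟨v, hc2⟩, rfl⟩
    · -- M, Y : impossible
      exfalso
      rcases hbM with ⟨t, ht, hbt⟩ | ⟨x'', hx'', hbx⟩
      · rcases S.iY_iY ((hbt.trans hb').symm) with rfl | ⟨v, w, rfl, _⟩
        · exact S.not_Ycons_TY ht hc2
        · exact S.not_Ycons_g v hc2
      · obtain ⟨v, w, _, hy3⟩ := S.iX_iY (hbx.trans hb')
        exact S.not_Ycons_g w (hy3 ▸ hc2)
    · exact Or.inr (Or.inr ⟨hp, haM, hcM⟩)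

lemma Pcons_parent {a b} (h : S.Pcons a b) :
    ∃ pe, S.Pparent a = some pe ∧ S.Pparent b = some pe := by
  rcases h with ⟨x, y, hc, rfl, rfl⟩ | ⟨x, y, hc, rfl, rfl⟩ | ⟨⟨e, he⟩, ha, hb⟩
  · obtain ⟨e, h1, h2⟩ := S.X.cons_parent hc
    exact ⟨Sum.inl e, by rw [S.Pparent_iX, S.hXel_eq, h1]; rfl,
      by rw [S.Pparent_iX, S.hXel_eq, h2]; rfl⟩
  · obtain ⟨e, h1, h2⟩ := S.Y.cons_parent hc
    exact ⟨Sum.inr e, by rw [S.Pparent_iY, S.hYel_of_parent h1]; rfl,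
      by rw [S.Pparent_iY, S.hYel_of_parent h2]; rfl⟩
  · exact ⟨Sum.inl e, S.M_parent he ha, S.M_parent he hb⟩

lemma Pcons_refl {a pe} (h : S.Pparent a = some pe) : S.Pcons a a := by
  rcases S.rep a with ⟨c, rfl⟩ | ⟨c, rfl⟩
  · rw [S.Pparent_iX, S.hXel_eq] at h
    obtain ⟨e, he, _⟩ := Option.map_eq_some_iff.mp h
    exact Or.inl ⟨c, c, S.X.cons_refl c e he, rfl, rfl⟩
  · rw [S.Pparent_iY] at h
    rcases S.hYel_eq_some h with ⟨e, _, hp⟩ | ⟨e, _, hp, _, ht⟩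
    · exact Or.inr (Or.inl ⟨c, c, S.Y.cons_refl c e hp, rfl, rfl⟩)
    · exact Or.inr (Or.inr ⟨⟨e, hp⟩, Or.inl ⟨c, ht, rfl⟩, Or.inl ⟨c, ht, rfl⟩⟩)

/-- The parent-step relation of the pushout. -/
def Pstep : (S.PV ⊕ S.PE) → (S.PV ⊕ S.PE) → Prop :=
  fun a b => ∃ e, a = Sum.inr e ∧ S.Pparent b = some e

lemma Pstep_X {a b} (h : S.Pstep a b) {e : S.X.E} (hb : b = Sum.inr (Sum.inl e)) :
    ∃ e', a = Sum.inr (Sum.inl e') ∧ S.X.parent (Sum.inr e) = some e' := by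
  subst hb
  obtain ⟨pe, rfl, hp⟩ := h
  have : S.Pparent (Sum.inr (Sum.inl e)) = (S.X.parent (Sum.inr e)).map Sum.inl := rfl
  replace hp := this.symm.trans hp
  obtain ⟨e', he', rfl⟩ := Option.map_eq_some_iff.mp hp
  exact ⟨e', rfl, he'⟩

lemma Pstep_Y {a b} (h : S.Pstep a b) {e : S.Y.E} (hb : b = Sum.inr (Sum.inr e)) :
    (∃ e', a = Sum.inr (Sum.inr e') ∧ S.Y.parent (Sum.inr e) = some e') ∨
    (∃ e', a = Sum.inr (Sum.inl e')) := by
  subst hb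
  obtain ⟨pe, rfl, hp⟩ := h
  have : S.Pparent (Sum.inr (Sum.inr e)) = S.hYel (Sum.inr e) := rfl
  replace hp := this.symm.trans hp
  rcases S.hYel_eq_some hp with ⟨e', rfl, hy⟩ | ⟨e', rfl, _, _, _⟩
  · exact Or.inl ⟨e', rfl, hy⟩
  · exact Or.inr ⟨e', rfl⟩

lemma Panc_X {a b} (h : Relation.TransGen S.Pstep a b) {e : S.X.E}
    (hb : b = Sum.inr (Sum.inl e)) :
    ∃ e', a = Sum.inr (Sum.inl e') ∧
      Relation.TransGen (pstep S.X) (Sum.inr e') (Sum.inr e) := by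
  subst hb
  induction h using Relation.TransGen.head_induction_on with
  | single hstep =>
    obtain ⟨e', rfl, hpar⟩ := S.Pstep_X hstep rfl
    exact ⟨e', rfl, Relation.TransGen.single ⟨e', rfl, hpar⟩⟩
  | head hstep _ ih =>
    obtain ⟨e1, rfl, hanc⟩ := ih
    obtain ⟨e2, rfl, hpar⟩ := S.Pstep_X hstep rfl
    exact ⟨e2, rfl, hanc.head ⟨e2, rfl, hpar⟩⟩

lemma Panc_Y {a b} (h : Relation.TransGen S.Pstep a b) {e : S.Y.E}
    (hb : b = Sum.inr (Sum.inr e)) :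
    (∃ e', a = Sum.inr (Sum.inr e') ∧
      Relation.TransGen (pstep S.Y) (Sum.inr e') (Sum.inr e)) ∨
    (∃ e', a = Sum.inr (Sum.inl e')) := by
  subst hb
  induction h using Relation.TransGen.head_induction_on with
  | single hstep =>
    rcases S.Pstep_Y hstep rfl with ⟨e', rfl, hpar⟩ | ⟨e', rfl⟩
    · exact Or.inl ⟨e', rfl, Relation.TransGen.single ⟨e', rfl, hpar⟩⟩
    · exact Or.inr ⟨e', rfl⟩
  | head hstep _ ih =>
    rcases ih with ⟨e1, rfl, hanc⟩ | ⟨e1, rfl⟩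
    · rcases S.Pstep_Y hstep rfl with ⟨e2, rfl, hpar⟩ | ⟨e2, rfl⟩
      · exact Or.inl ⟨e2, rfl, hanc.head ⟨e2, rfl, hpar⟩⟩
      · exact Or.inr ⟨e2, rfl⟩
    · obtain ⟨e2, rfl, _⟩ := S.Pstep_X hstep rfl
      exact Or.inr ⟨e2, rfl⟩

lemma Pacyclic (p : S.PV ⊕ S.PE) : ¬ Relation.TransGen S.Pstep p p := by
  intro h
  obtain ⟨m, hstep, _⟩ := Relation.TransGen.head'_iff.mp h
  obtain ⟨pe, rfl, _⟩ := hstep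
  rcases pe with e | e
  · obtain ⟨e', he', hanc⟩ := S.Panc_X h rfl
    injection he' with he'
    injection he' with he'
    subst he'
    exact S.X.acyclic_parent _ hanc
  · rcases S.Panc_Y h rfl with ⟨e', he', hanc⟩ | ⟨e', he'⟩
    · injection he' with he'
      injection he' with he'
      subst he'
      exact S.Y.acyclic_parent _ hanc
    · cases he'

end Setting
end EPush
namespace EPush
namespace Setting

variable {σ : MSig} (S : Setting σ)

lemma pX_some_child {e} (he : S.pX = some e) :
    ∃ v : S.Z.V, S.X.parent (Sum.inl (S.f.onV v)) = some e := by
  by_cases h : Nonempty S.Z.V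
  · exact ⟨h.some, (S.pX_spec h.some).trans he⟩
  · rw [pX, dif_neg h] at he
    cases he

lemma Pparent_some_inl {p e} (h : S.Pparent p = some (Sum.inl e)) :
    (∃ c, p = S.iX c ∧ S.X.parent c = some e) ∨
    (∃ c, p = S.iY c ∧ c ∈ S.TY ∧ S.pX = some e) := by
  rcases S.rep p with ⟨c, rfl⟩ | ⟨c, rfl⟩
  · rw [S.Pparent_iX, S.hXel_eq] at h
    obtain ⟨e', he', heq⟩ := Option.map_eq_some_iff.mp h
    injection heq with heq
    exact Or.inl ⟨c, rfl, heq ▸ he'⟩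
  · rw [S.Pparent_iY] at h
    rcases S.hYel_eq_some h with ⟨e', heq, _⟩ | ⟨e', heq, hp, _, ht⟩
    · cases heq
    · injection heq with heq
      exact Or.inr ⟨c, rfl, ht, heq ▸ hp⟩

lemma Pparent_some_inr {p e} (h : S.Pparent p = some (Sum.inr e)) :
    ∃ c, p = S.iY c ∧ S.Y.parent c = some e := by
  rcases S.rep p with ⟨c, rfl⟩ | ⟨c, rfl⟩
  · rw [S.Pparent_iX, S.hXel_eq] at h
    obtain ⟨e', _, heq⟩ := Option.map_eq_some_iff.mp h
    cases heq
  · rw [S.Pparent_iY] at h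
    rcases S.hYel_eq_some h with ⟨e', heq, hp⟩ | ⟨e', heq, _⟩
    · injection heq with heq
      exact ⟨c, rfl, heq ▸ hp⟩
    · cases heq

lemma mem_AX_of_iX_mem_M {x e} (hx : S.iX x ∈ S.M) (hp : S.X.parent x = some e) :
    x ∈ S.AX := by
  rcases hx with ⟨t, _, hbt⟩ | ⟨x', hx', hbx⟩
  · obtain ⟨v, w, hx1, _⟩ := S.iX_iY hbt.symm
    exact ⟨v, hx1 ▸ (hx1 ▸ S.X.cons_refl x e hp)⟩
  · rcases S.iX_iX hbx with rfl | ⟨v, w, _, hx1⟩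
    · exact hx'
    · exact ⟨w, hx1 ▸ (hx1 ▸ S.X.cons_refl x e hp)⟩

lemma hYel_conn {y e} (hm : y ∈ S.Y.src e ∨ y ∈ S.Y.tgt e) :
    S.hYel (Sum.inl y) = S.hYel (Sum.inr e) := by
  have hiff : ((Sum.inl y : S.Y.V ⊕ S.Y.E) ∈ S.TY) ↔ ((Sum.inr e : S.Y.V ⊕ S.Y.E) ∈ S.TY) :=
    ⟨fun h => S.TY_inc h (Or.inl ⟨y, e, rfl, rfl, hm⟩),
     fun h => S.TY_inc h (Or.inr ⟨y, e, rfl, rfl, hm⟩)⟩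
  classical
  unfold hYel
  rw [S.Y.parent_conn e y hm]
  cases S.Y.parent (Sum.inr e) with
  | some e' => rfl
  | none =>
    show (if _ ∈ S.TY then _ else _) = (if _ ∈ S.TY then _ else _)
    exact if_congr hiff rfl rfl

lemma Pnontotal (pe : S.PE) (h : ∃ p, S.Pparent p = some pe) :
    ∃ p q, S.Pparent p = some pe ∧ S.Pparent q = some pe ∧ ¬ S.Pcons p q := by
  obtain ⟨p0, hp0⟩ := h
  rcases pe with e | e
  · -- an X-edge
    have hchild : ∃ c, S.X.parent c = some e := by
      rcases S.Pparent_some_inl hp0 with ⟨c, _, hc⟩ | ⟨c, _, _, hpx⟩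
      · exact ⟨c, hc⟩
      · obtain ⟨v, hv⟩ := S.pX_some_child hpx
        exact ⟨_, hv⟩
    obtain ⟨x1, x2, hp1, hp2, hnc⟩ := S.X.cons_nontotal e hchild
    refine ⟨S.iX x1, S.iX x2, ?_, ?_, ?_⟩
    · rw [S.Pparent_iX, S.hXel_eq, hp1]; rfl
    · rw [S.Pparent_iX, S.hXel_eq, hp2]; rfl
    · intro hP
      apply hnc
      rcases hP with ⟨x, y, hcx, h1, h2⟩ | ⟨y3, y4, hcy, h1, _⟩ | ⟨_, h1M, h2M⟩
      · -- via X
        rcases S.iX_iX h1 with rfl | ⟨v1, w1, rfl, rfl⟩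
        · rcases S.iX_iX h2 with rfl | ⟨v2, w2, rfl, rfl⟩
          · exact hcx
          · exact S.Xcons_transfer hcx
        · rcases S.iX_iX h2 with rfl | ⟨v2, w2, rfl, rfl⟩
          · exact (S.hcons w1 v1 _).mp hcx
          · exact S.Xcons_transfer ((S.hcons w1 v1 _).mp hcx)
      · -- via Y : impossible
        obtain ⟨v, w, _, hy3⟩ := S.iX_iY h1
        exact absurd (hy3 ▸ hcy) (S.not_Ycons_g w)
      · -- via M
        have hx1 := S.mem_AX_of_iX_mem_M h1M hp1
        have hx2 := S.mem_AX_of_iX_mem_M h2M hp2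
        obtain ⟨v1, hv1⟩ := hx1
        obtain ⟨v2, hv2⟩ := hx2
        exact S.X.cons_trans (S.X.cons_symm hv1) ((S.hcons v2 v1 x2).mp hv2)
  · -- a Y-edge
    have hchild : ∃ c, S.Y.parent c = some e := by
      obtain ⟨c, _, hc⟩ := S.Pparent_some_inr hp0
      exact ⟨c, hc⟩
    obtain ⟨y1, y2, hp1, hp2, hnc⟩ := S.Y.cons_nontotal e hchild
    refine ⟨S.iY y1, S.iY y2, ?_, ?_, ?_⟩
    · rw [S.Pparent_iY, S.hYel_of_parent hp1]; rfl
    · rw [S.Pparent_iY, S.hYel_of_parent hp2]; rfl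
    · intro hP
      apply hnc
      rcases hP with ⟨x, y, hcx, h1, _⟩ | ⟨y3, y4, hcy, h1, h2⟩ | ⟨_, h1M, _⟩
      · -- via X : impossible
        obtain ⟨v, w, _, hy1⟩ := S.iX_iY (h1.symm)
        rw [hy1] at hp1
        rw [S.hext w] at hp1
        cases hp1
      · -- via Y
        rcases S.iY_iY h1 with rfl | ⟨v, w, rfl, _⟩
        · rcases S.iY_iY h2 with rfl | ⟨v, w, rfl, _⟩
          · exact hcy
          · rw [S.hext v] at hp2; cases hp2
        · rw [S.hext v] at hp1; cases hp1
      · -- via M : impossible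
        exfalso
        rcases h1M with ⟨t, ht, hbt⟩ | ⟨x', _, hbx⟩
        · rcases S.iY_iY hbt with rfl | ⟨v, w, _, hy1⟩
          · rw [S.TY_toplevel ht] at hp1; cases hp1
          · rw [hy1, S.hext w] at hp1; cases hp1
        · obtain ⟨v, w, _, hy1⟩ := S.iX_iY hbx
          rw [hy1, S.hext w] at hp1; cases hp1

end Setting
end EPush
namespace EPush
namespace Setting

variable {σ : MSig} (S : Setting σ)

/-- The pushout e-hypergraph. -/
noncomputable def P : EHyp σ where
  V := S.PV
  E := S.PE
  fintV :=
    letI := Classical.decEq S.PV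
    Fintype.ofSurjective S.qk
      (fun q => Quot.exists_rep q)
  fintE := inferInstanceAs (Fintype (S.X.E ⊕ S.Y.E))
  src := Sum.elim (fun e => (S.X.src e).map fun x => S.qk (Sum.inl x))
    (fun e => (S.Y.src e).map fun y => S.qk (Sum.inr y))
  tgt := Sum.elim (fun e => (S.X.tgt e).map fun x => S.qk (Sum.inl x))
    (fun e => (S.Y.tgt e).map fun y => S.qk (Sum.inr y))
  lbl := Sum.elim S.X.lbl S.Y.lbl
  parent := S.Pparent
  cons := S.Pcons
  lbl_ar := by
    rintro (e | e) gg h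
    · simpa using S.X.lbl_ar e gg h
    · simpa using S.Y.lbl_ar e gg h
  parent_hier := by
    rintro p (e | e) h
    · rcases S.Pparent_some_inl h with ⟨c, _, hc⟩ | ⟨c, _, _, hpx⟩
      · exact S.X.parent_hier c e hc
      · obtain ⟨v, hv⟩ := S.pX_some_child hpx
        exact S.X.parent_hier _ e hv
    · obtain ⟨c, _, hc⟩ := S.Pparent_some_inr h
      exact S.Y.parent_hier c e hc
  acyclic_parent := S.Pacyclic
  parent_conn := by
    rintro (e | e) v hm
    · have hx : ∃ x, (x ∈ S.X.src e ∨ x ∈ S.X.tgt e) ∧ v = S.qk (Sum.inl x) := by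
        rcases hm with hm | hm <;> obtain ⟨x, hx, rfl⟩ := List.mem_map.mp hm
        · exact ⟨x, Or.inl hx, rfl⟩
        · exact ⟨x, Or.inr hx, rfl⟩
      obtain ⟨x, hx, rfl⟩ := hx
      show S.Pparent (S.iX (Sum.inl x)) = S.Pparent (S.iX (Sum.inr e))
      rw [S.Pparent_iX, S.Pparent_iX, S.hXel_eq, S.hXel_eq, S.X.parent_conn e x hx]
    · have hy : ∃ y, (y ∈ S.Y.src e ∨ y ∈ S.Y.tgt e) ∧ v = S.qk (Sum.inr y) := by
        rcases hm with hm | hm <;> obtain ⟨y, hy, rfl⟩ := List.mem_map.mp hm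
        · exact ⟨y, Or.inl hy, rfl⟩
        · exact ⟨y, Or.inr hy, rfl⟩
      obtain ⟨y, hy, rfl⟩ := hy
      show S.Pparent (S.iY (Sum.inl y)) = S.Pparent (S.iY (Sum.inr e))
      rw [S.Pparent_iY, S.Pparent_iY, S.hYel_conn hy]
  maximal_lbl := by
    rintro (e | e) hmax
    · exact S.X.maximal_lbl e fun c hc =>
        hmax (S.iX c) (by rw [S.Pparent_iX, S.hXel_eq, hc]; rfl)
    · exact S.Y.maximal_lbl e fun c hc =>
        hmax (S.iY c) (by rw [S.Pparent_iY, S.hYel_of_parent hc]; rfl)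
  cons_symm := fun h => S.Pcons_symm h
  cons_trans := fun h1 h2 => S.Pcons_trans h1 h2
  cons_parent := fun h => S.Pcons_parent h
  cons_refl := fun _ _ h => S.Pcons_refl h
  cons_conn := by
    rintro (e | e) v hm hex
    · have hx : ∃ x, (x ∈ S.X.src e ∨ x ∈ S.X.tgt e) ∧ v = S.qk (Sum.inl x) := by
        rcases hm with hm | hm <;> obtain ⟨x, hx, rfl⟩ := List.mem_map.mp hm
        · exact ⟨x, Or.inl hx, rfl⟩
        · exact ⟨x, Or.inr hx, rfl⟩
      obtain ⟨x, hx, rfl⟩ := hx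
      obtain ⟨p, hp⟩ := hex
      have hp' : S.Pparent (S.iX (Sum.inl x)) = some p := hp
      rw [S.Pparent_iX, S.hXel_eq] at hp'
      obtain ⟨e', he', _⟩ := Option.map_eq_some_iff.mp hp'
      exact Or.inl ⟨Sum.inl x, Sum.inr e, S.X.cons_conn e x hx ⟨e', he'⟩, rfl, rfl⟩
    · have hy : ∃ y, (y ∈ S.Y.src e ∨ y ∈ S.Y.tgt e) ∧ v = S.qk (Sum.inr y) := by
        rcases hm with hm | hm <;> obtain ⟨y, hy, rfl⟩ := List.mem_map.mp hm
        · exact ⟨y, Or.inl hy, rfl⟩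
        · exact ⟨y, Or.inr hy, rfl⟩
      obtain ⟨y, hy, rfl⟩ := hy
      obtain ⟨p, hp⟩ := hex
      have hp' : S.Pparent (S.iY (Sum.inl y)) = some p := hp
      rw [S.Pparent_iY] at hp'
      rcases S.hYel_eq_some hp' with ⟨e', _, hpar⟩ | ⟨e', _, hpx, _, ht⟩
      · exact Or.inr (Or.inl ⟨Sum.inl y, Sum.inr e, S.Y.cons_conn e y hy ⟨e', hpar⟩, rfl, rfl⟩)
      · exact Or.inr (Or.inr ⟨⟨e', hpx⟩, Or.inl ⟨Sum.inl y, ht, rfl⟩,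
          Or.inl ⟨Sum.inr e, S.TY_inc ht (Or.inl ⟨y, e, rfl, rfl, hy⟩), rfl⟩⟩)
  cons_nontotal := fun pe h => S.Pnontotal pe h

/-- The inclusion of `X` into the pushout. -/
noncomputable def inX : S.X ⟶ S.P where
  onV := fun x => S.qk (Sum.inl x)
  onE := Sum.inl
  map_src := fun _ => rfl
  map_tgt := fun _ => rfl
  map_lbl := fun _ => rfl
  map_parent := by
    rintro (x | e) e' h
    · show S.Pparent (S.iX (Sum.inl x)) = _
      rw [S.Pparent_iX, S.hXel_eq, h]
      rfl
    · show S.Pparent (S.iX (Sum.inr e)) = _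
      rw [S.Pparent_iX, S.hXel_eq, h]
      rfl
  map_cons := by
    intro x y h
    refine Or.inl ⟨x, y, h, ?_, ?_⟩ <;> cases x <;> cases y <;> rfl

/-- The inclusion of `Y` into the pushout. -/
noncomputable def inY : S.Y ⟶ S.P where
  onV := fun y => S.qk (Sum.inr y)
  onE := Sum.inr
  map_src := fun _ => rfl
  map_tgt := fun _ => rfl
  map_lbl := fun _ => rfl
  map_parent := by
    rintro (y | e) e' h
    · show S.Pparent (S.iY (Sum.inl y)) = _
      rw [S.Pparent_iY, S.hYel_of_parent h]; rfl
    · show S.Pparent (S.iY (Sum.inr e)) = _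
      rw [S.Pparent_iY, S.hYel_of_parent h]; rfl
  map_cons := by
    intro x y h
    refine Or.inr (Or.inl ⟨x, y, h, ?_, ?_⟩) <;> cases x <;> cases y <;> rfl

lemma comm : S.f ≫ S.inX = S.g ≫ S.inY := by
  apply EHypHom.ext'
  · funext v
    exact Quot.sound ⟨v, rfl, rfl⟩
  · funext e
    exact (S.hE.false e).elim

end Setting
end EPush
namespace EPush
namespace Setting

open CategoryTheory CategoryTheory.Limits

variable {σ : MSig} (S : Setting σ) {W : EHyp σ} (a : S.X ⟶ W) (b : S.Y ⟶ W)

lemma onV_comm (hab : S.f ≫ a = S.g ≫ b) (v : S.Z.V) :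
    a.onV (S.f.onV v) = b.onV (S.g.onV v) :=
  congrFun (congrArg EHypHom.onV hab) v

lemma W_inc_parent {c d} (h : inc S.Y c d) :
    W.parent (Sum.map b.onV b.onE c) = W.parent (Sum.map b.onV b.onE d) := by
  have key : ∀ (yv : S.Y.V) (ye : S.Y.E), (yv ∈ S.Y.src ye ∨ yv ∈ S.Y.tgt ye) →
      W.parent (Sum.inl (b.onV yv)) = W.parent (Sum.inr (b.onE ye)) := by
    intro yv ye hm
    apply W.parent_conn
    rcases hm with hm | hm
    · exact Or.inl (by rw [b.map_src]; exact List.mem_map_of_mem hm)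
    · exact Or.inr (by rw [b.map_tgt]; exact List.mem_map_of_mem hm)
  rcases h with ⟨yv, ye, rfl, rfl, hm⟩ | ⟨yv, ye, rfl, rfl, hm⟩
  · exact key yv ye hm
  · exact (key yv ye hm).symm

lemma W_parent_chain (hab : S.f ≫ a = S.g ≫ b) {eX} (he : S.pX = some eX) {v c}
    (hc : Relation.ReflTransGen (inc S.Y) (Sum.inl (S.g.onV v)) c) :
    W.parent (Sum.map b.onV b.onE c) = some (a.onE eX) := by
  induction hc with
  | refl =>
    show W.parent (Sum.inl (b.onV (S.g.onV v))) = _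
    rw [← onV_comm S a b hab v]
    exact a.map_parent (Sum.inl (S.f.onV v)) eX (by rw [S.pX_spec v, he])
  | tail _ hstep ih =>
    rw [← W_inc_parent S b hstep]
    exact ih

lemma W_parent_TY (hab : S.f ≫ a = S.g ≫ b) {eX} (he : S.pX = some eX) {c}
    (hc : c ∈ S.TY) :
    W.parent (Sum.map b.onV b.onE c) = some (a.onE eX) := by
  obtain ⟨v, hv⟩ := hc
  exact W_parent_chain S a b hab he hv

lemma W_cons_chain (hab : S.f ≫ a = S.g ≫ b) {eX} (he : S.pX = some eX) {v c}
    (hc : Relation.ReflTransGen (inc S.Y) (Sum.inl (S.g.onV v)) c) :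
    W.cons (Sum.inl (b.onV (S.g.onV v))) (Sum.map b.onV b.onE c) := by
  induction hc with
  | refl =>
    exact W.cons_refl _ (a.onE eX)
      (W_parent_chain S a b hab he (Relation.ReflTransGen.refl))
  | tail hsteps hstep ih =>
    rename_i c' c
    have hmem : ∀ (yv : S.Y.V) (ye : S.Y.E), (yv ∈ S.Y.src ye ∨ yv ∈ S.Y.tgt ye) →
        (b.onV yv ∈ W.src (b.onE ye) ∨ b.onV yv ∈ W.tgt (b.onE ye)) := by
      intro yv ye hm
      rcases hm with hm | hm
      · exact Or.inl (by rw [b.map_src]; exact List.mem_map_of_mem hm)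
      · exact Or.inr (by rw [b.map_tgt]; exact List.mem_map_of_mem hm)
    have hc' : W.cons (Sum.map b.onV b.onE c') (Sum.map b.onV b.onE c) := by
      rcases hstep with ⟨yv, ye, rfl, rfl, hm⟩ | ⟨yv, ye, rfl, rfl, hm⟩
      · exact W.cons_conn (b.onE ye) (b.onV yv) (hmem yv ye hm)
          ⟨_, W_parent_chain S a b hab he hsteps⟩
      · exact W.cons_symm (W.cons_conn (b.onE ye) (b.onV yv) (hmem yv ye hm)
          ⟨_, W_parent_chain S a b hab he
            (hsteps.tail (Or.inr ⟨yv, ye, rfl, rfl, hm⟩))⟩)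
    exact W.cons_trans ih hc'

lemma W_cons_anchor_TY (hab : S.f ≫ a = S.g ≫ b) {eX} (he : S.pX = some eX)
    (v₀ : S.Z.V) {c} (hc : c ∈ S.TY) :
    W.cons (Sum.inl (a.onV (S.f.onV v₀))) (Sum.map b.onV b.onE c) := by
  obtain ⟨v, hv⟩ := hc
  have h1 := W_cons_chain S a b hab he hv
  have h2 : S.X.cons (Sum.inl (S.f.onV v₀)) (Sum.inl (S.f.onV v)) :=
    (S.hcons v v₀ _).mp (S.X.cons_refl _ eX (by rw [S.pX_spec v, he]))
  have h3 := a.map_cons _ _ h2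
  exact W.cons_trans (onV_comm S a b hab v ▸ h3) h1

lemma W_cons_anchor_AX (v₀ : S.Z.V) {x} (hx : x ∈ S.AX) :
    W.cons (Sum.inl (a.onV (S.f.onV v₀))) (Sum.map a.onV a.onE x) := by
  obtain ⟨v, hv⟩ := hx
  exact a.map_cons _ _ ((S.hcons v v₀ _).mp hv)

/-- The mediating morphism out of the pushout. -/
noncomputable def desc (hab : S.f ≫ a = S.g ≫ b) : S.P ⟶ W where
  onV := Quot.lift (Sum.elim a.onV b.onV) (by
    rintro _ _ ⟨v, rfl, rfl⟩
    exact onV_comm S a b hab v)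
  onE := Sum.elim a.onE b.onE
  map_src := by
    rintro (e | e)
    · have hh : S.P.src (Sum.inl e) = (S.X.src e).map fun x => S.qk (Sum.inl x) := rfl
      rw [hh]
      exact (a.map_src e).trans (Eq.symm List.map_map)
    · have hh : S.P.src (Sum.inr e) = (S.Y.src e).map fun y => S.qk (Sum.inr y) := rfl
      rw [hh]
      exact (b.map_src e).trans (Eq.symm List.map_map)
  map_tgt := by
    rintro (e | e)
    · have hh : S.P.tgt (Sum.inl e) = (S.X.tgt e).map fun x => S.qk (Sum.inl x) := rfl
      rw [hh]
      exact (a.map_tgt e).trans (Eq.symm List.map_map)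
    · have hh : S.P.tgt (Sum.inr e) = (S.Y.tgt e).map fun y => S.qk (Sum.inr y) := rfl
      rw [hh]
      exact (b.map_tgt e).trans (Eq.symm List.map_map)
  map_lbl := by
    rintro (e | e)
    · exact a.map_lbl e
    · exact b.map_lbl e
  map_parent := by
    intro p pe h
    rcases S.rep p with ⟨c, rfl⟩ | ⟨c, rfl⟩
    · replace h : S.Pparent (S.iX c) = some pe := h
      rw [S.Pparent_iX, S.hXel_eq] at h
      obtain ⟨e', he', rfl⟩ := Option.map_eq_some_iff.mp h
      rcases c with x | e0
      · exact a.map_parent (Sum.inl x) e' he'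
      · exact a.map_parent (Sum.inr e0) e' he'
    · replace h : S.Pparent (S.iY c) = some pe := h
      rw [S.Pparent_iY] at h
      rcases S.hYel_eq_some h with ⟨e', rfl, hpar⟩ | ⟨e', rfl, hpx, _, ht⟩
      · rcases c with y | e0
        · exact b.map_parent (Sum.inl y) e' hpar
        · exact b.map_parent (Sum.inr e0) e' hpar
      · have hw := W_parent_TY S a b hab hpx ht
        rcases c with y | e0
        · exact hw
        · exact hw
  map_cons := by
    intro p q h
    rcases h with ⟨x, y, hc, rfl, rfl⟩ | ⟨x, y, hc, rfl, rfl⟩ | ⟨⟨eX, he⟩, hp, hq⟩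
    · have := a.map_cons x y hc
      rcases x with x | x <;> rcases y with y | y <;> exact this
    · have := b.map_cons x y hc
      rcases x with x | x <;> rcases y with y | y <;> exact this
    · obtain ⟨v₀, _⟩ := S.pX_some_child he
      have key : ∀ p ∈ S.M, W.cons (Sum.inl (a.onV (S.f.onV v₀)))
          (Sum.map (Quot.lift (Sum.elim a.onV b.onV) (by
            rintro _ _ ⟨v, rfl, rfl⟩
            exact onV_comm S a b hab v)) (Sum.elim a.onE b.onE) p) := by
        intro m hm
        rcases hm with ⟨t, ht, rfl⟩ | ⟨x, hx, rfl⟩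
        · have := W_cons_anchor_TY S a b hab he v₀ ht
          rcases t with t | t <;> exact this
        · have := W_cons_anchor_AX S a v₀ hx
          rcases x with x | x <;> exact this
      exact W.cons_trans (W.cons_symm (key p hp)) (key q hq)

end Setting
end EPush
namespace EPush
namespace Setting

open CategoryTheory CategoryTheory.Limits

variable {σ : MSig}

theorem pushout_aux (S : Setting σ) :
    ∃ (P : EHyp σ) (pX : S.X ⟶ P) (pY : S.Y ⟶ P), IsPushout S.f S.g pX pY := by
  refine ⟨S.P, S.inX, S.inY, IsPushout.of_isColimit (PushoutCocone.IsColimit.mk S.comm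
    (fun s => S.desc s.inl s.inr s.condition) ?_ ?_ ?_)⟩
  · intro s
    apply EHypHom.ext'
    · funext x
      rfl
    · funext e
      rfl
  · intro s
    apply EHypHom.ext'
    · funext y
      rfl
    · funext e
      rfl
  · intro s m h1 h2
    apply EHypHom.ext'
    · funext q
      induction q using Quot.ind with
      | _ c =>
        rcases c with x | y
        · exact congrFun (congrArg EHypHom.onV h1) x
        · exact congrFun (congrArg EHypHom.onV h2) y
    · funext e
      rcases e with e | e
      · exact congrFun (congrArg EHypHom.onE h1) e
      · exact congrFun (congrArg EHypHom.onE h2) e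

end Setting
end EPush
/-- **Existence of pushouts in `EHyp(σ)`.**  Let `Z` be a discrete e-hypergraph and
`f : Z → X`, `g : Z → Y` e-hypergraph homomorphisms such that (i) the images under each leg
of any two vertices of `Z` have the same set of parents, (ii) no vertex of `Z` has a parent
under both legs, and (iii) the images under each leg of any two vertices of `Z` have the
same consistency class.  Then the pushout `X +_{f,g} Y` of the span `Y ← Z → X` exists in
`EHyp(σ)`. -/
theorem EHyp.pushout_exists {σ : MSig} {Z X Y : EHyp σ} (f : Z ⟶ X) (g : Z ⟶ Y)
    (hdiscrete : IsEmpty Z.E)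
    (hparentsX : ∀ v w : Z.V, ∀ x,
      X.anc x (Sum.inl (f.onV v)) ↔ X.anc x (Sum.inl (f.onV w)))
    (hparentsY : ∀ v w : Z.V, ∀ y,
      Y.anc y (Sum.inl (g.onV v)) ↔ Y.anc y (Sum.inl (g.onV w)))
    (hexcl₁ : ∀ v : Z.V, (∃ x, X.anc x (Sum.inl (f.onV v))) →
      ¬ ∃ y, Y.anc y (Sum.inl (g.onV v)))
    (hexcl₂ : ∀ v : Z.V, (∃ y, Y.anc y (Sum.inl (g.onV v))) →
      ¬ ∃ x, X.anc x (Sum.inl (f.onV v)))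
    (hconsX : ∀ v w : Z.V, ∀ x,
      X.cons (Sum.inl (f.onV v)) x ↔ X.cons (Sum.inl (f.onV w)) x)
    (hconsY : ∀ v w : Z.V, ∀ y,
      Y.cons (Sum.inl (g.onV v)) y ↔ Y.cons (Sum.inl (g.onV w)) y) :
    ∃ (P : EHyp σ) (inX : X ⟶ P) (inY : Y ⟶ P), IsPushout f g inX inY := by
  by_cases hY0 : ∀ v, Y.parent (Sum.inl (g.onV v)) = none
  · exact EPush.Setting.pushout_aux ⟨Z, X, Y, f, g, hdiscrete, hY0, hparentsX, hconsX⟩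
  · push_neg at hY0
    obtain ⟨v₀, hv₀⟩ := hY0
    obtain ⟨e₀, he₀⟩ := Option.ne_none_iff_exists'.mp hv₀
    have hX0 : ∀ v, X.parent (Sum.inl (f.onV v)) = none := by
      intro v
      by_contra hcc
      obtain ⟨e, he⟩ := Option.ne_none_iff_exists'.mp hcc
      exact hexcl₂ v ⟨Sum.inr e₀, (hparentsY v₀ v _).mp (EPush.anc_of_parent Y he₀)⟩
        ⟨Sum.inr e, EPush.anc_of_parent X he⟩
    obtain ⟨P, iy, ix, hp⟩ :=
      EPush.Setting.pushout_aux ⟨Z, Y, X, g, f, hdiscrete, hX0, hparentsY, hconsY⟩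
    exact ⟨P, ix, iy, hp.flip⟩
end

section
/- Let Σ be a monoidal signature and let Y ← Z → X be a span in EHyp(Σ) satisfying the hypotheses of the pushout-existence theorem (Z discrete; equal parent-sets and equal consistency classes of the images of any two vertices of Z under each leg; and no vertex of Z having a parent under both legs). If both legs f : Z → X and g : Z → Y are monomorphisms, then the two pushout injections X → X +_{f,g} Y and Y → X +_{f,g} Y are also monomorphisms. -/
open CategoryTheory

variable (σ : MSig)

section Aux

variable {σ : MSig}

/-- A single-vertex discrete e-hypergraph, used to test injectivity on vertices. -/
private def pt (σ : MSig) : EHyp σ where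
  V := PUnit
  E := Empty
  src e := e.elim
  tgt e := e.elim
  lbl e := e.elim
  parent _ := none
  cons _ _ := False
  lbl_ar e := e.elim
  parent_hier _ e := e.elim
  acyclic_parent x h := by
    cases h with
    | single h => obtain ⟨e, -, -⟩ := h; exact e.elim
    | tail _ h => obtain ⟨e, -, -⟩ := h; exact e.elim
  maximal_lbl e := e.elim
  cons_symm h := h.elim
  cons_trans h _ := h.elim
  cons_parent h := h.elim
  cons_refl _ e _ := e.elim
  cons_conn e := e.elim
  parent_conn e := e.elim
  cons_nontotal e := e.elim

private def ptHom (G : EHyp σ) (v : G.V) : pt σ ⟶ G where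
  onV _ := v
  onE e := Empty.elim e
  map_src e := Empty.elim e
  map_tgt e := Empty.elim e
  map_lbl e := Empty.elim e
  map_parent _ e _ := Empty.elim e
  map_cons _ _ h := False.elim h

private lemma injV_of_mono {G H : EHyp σ} (φ : G ⟶ H) (h : Mono φ) :
    Function.Injective φ.onV := by
  intro v w hvw
  have he : ptHom G v ≫ φ = ptHom G w ≫ φ :=
    EHypHom.ext' (funext fun _ => hvw) (funext fun e => e.elim)
  have hvw' := h.right_cancellation _ _ he
  exact congrArg (fun ψ : pt σ ⟶ G => ψ.onV PUnit.unit) hvw'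

private lemma mono_of_inj {G H : EHyp σ} (φ : G ⟶ H)
    (hV : Function.Injective φ.onV) (hE : Function.Injective φ.onE) : Mono φ := by
  constructor
  intro W a b h
  exact EHypHom.ext'
    (funext fun x => hV (congrFun (congrArg EHypHom.onV h) x))
    (funext fun e => hE (congrFun (congrArg EHypHom.onE h) e))

private lemma anc_of_parent (G : EHyp σ) {a : G.V ⊕ G.E} {e : G.E}
    (h : G.parent a = some e) : G.anc (Sum.inr e) a :=
  Relation.TransGen.single ⟨e, rfl, h⟩

private lemma parent_isSome_of_anc (G : EHyp σ) {a x : G.V ⊕ G.E} (h : G.anc x a) :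
    ∃ e, G.parent a = some e := by
  cases h with
  | single h => obtain ⟨e, -, hp⟩ := h; exact ⟨e, hp⟩
  | tail _ h => obtain ⟨e, -, hp⟩ := h; exact ⟨e, hp⟩

private lemma parent_eq_of_anc_iff (G : EHyp σ) {a b : G.V ⊕ G.E}
    (h : ∀ x, G.anc x a ↔ G.anc x b) {q : G.E} (hq : G.parent a = some q) :
    G.parent b = some q := by
  have h1 : G.anc (Sum.inr q) b := (h _).mp (anc_of_parent G hq)
  cases h1 with
  | single hs =>
    obtain ⟨e, he, hp⟩ := hs
    obtain rfl : q = e := Sum.inr.inj he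
    exact hp
  | tail h1 hs =>
    obtain ⟨e, rfl, hp⟩ := hs
    have h2 : G.anc (Sum.inr e) a := (h _).mpr (anc_of_parent G hp)
    cases h2 with
    | single hs2 =>
      obtain ⟨e', he', hp'⟩ := hs2
      obtain rfl : e = e' := Sum.inr.inj he'
      rw [hq] at hp'
      obtain rfl : q = e := Option.some.inj hp'
      exact absurd h1 (G.acyclic_parent _)
    | tail h2 hs2 =>
      obtain ⟨e'', rfl, hp''⟩ := hs2
      rw [hq] at hp''
      obtain rfl : q = e'' := Option.some.inj hp''
      exact absurd (h1.trans h2) (G.acyclic_parent _)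

end Aux

section Glue

variable {σ : MSig} {Z X Y : EHyp σ}

/-- Vertices of `Y` not in the image of `g`. -/
private abbrev GluedV (g : Z ⟶ Y) : Type := {y : Y.V // ¬ ∃ v, g.onV v = y}

open Classical in
private noncomputable def gi (f : Z ⟶ X) (g : Z ⟶ Y) : Y.V → X.V ⊕ GluedV g := fun y =>
  if h : ∃ v, g.onV v = y then Sum.inl (f.onV h.choose) else Sum.inr ⟨y, h⟩

private lemma gi_glued (f : Z ⟶ X) (g : Z ⟶ Y) (hgV : Function.Injective g.onV)
    (v : Z.V) : gi f g (g.onV v) = Sum.inl (f.onV v) := by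
  unfold gi
  rw [dif_pos ⟨v, rfl⟩]
  exact congrArg Sum.inl (congrArg f.onV (hgV (⟨v, rfl⟩ : ∃ w, g.onV w = g.onV v).choose_spec))

private lemma gi_pure (f : Z ⟶ X) (g : Z ⟶ Y) {y : Y.V} (h : ¬ ∃ v, g.onV v = y) :
    gi f g y = Sum.inr ⟨y, h⟩ := by
  unfold gi
  rw [dif_neg h]

private def cls (g : Z ⟶ Y) :
    (X.V ⊕ GluedV g) ⊕ (X.E ⊕ Y.E) → (X.V ⊕ X.E) ⊕ (Y.V ⊕ Y.E)
  | Sum.inl (Sum.inl x) => Sum.inl (Sum.inl x)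
  | Sum.inl (Sum.inr s) => Sum.inr (Sum.inl s.1)
  | Sum.inr (Sum.inl e) => Sum.inl (Sum.inr e)
  | Sum.inr (Sum.inr e) => Sum.inr (Sum.inr e)

private lemma cls_mapX (g : Z ⟶ Y) (z : X.V ⊕ X.E) :
    cls (X := X) g (Sum.map Sum.inl Sum.inl z) = Sum.inl z := by
  cases z <;> rfl

private noncomputable def tpar (g : Z ⟶ Y) (r? : Option Y.E)
    (a : (X.V ⊕ GluedV g) ⊕ (X.E ⊕ Y.E)) : Option (X.E ⊕ Y.E) :=
  Sum.elim
    (fun xe => (X.parent xe).elim (r?.map Sum.inr) (fun p => some (Sum.inl p)))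
    (fun ye => (Y.parent ye).map Sum.inr)
    (cls g a)

private def tcons (g : Z ⟶ Y) (r? : Option Y.E) (C : Y.V ⊕ Y.E → Prop)
    (a b : (X.V ⊕ GluedV g) ⊕ (X.E ⊕ Y.E)) : Prop :=
  Sum.elim
    (fun xa => Sum.elim
      (fun xb => X.cons xa xb ∨
        (X.parent xa = none ∧ X.parent xb = none ∧ r?.isSome = true))
      (fun yb => X.parent xa = none ∧ C yb) (cls g b))
    (fun ya => Sum.elim
      (fun xb => X.parent xb = none ∧ C ya)
      (fun yb => Y.cons ya yb) (cls g b))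
    (cls g a)

private lemma tpar_eq_some (g : Z ⟶ Y) (r? : Option Y.E)
    {a : (X.V ⊕ GluedV g) ⊕ (X.E ⊕ Y.E)} {e : X.E ⊕ Y.E}
    (h : tpar g r? a = some e) :
    (∃ xe p, cls g a = Sum.inl xe ∧ X.parent xe = some p ∧ e = Sum.inl p) ∨
    (∃ xe r, cls g a = Sum.inl xe ∧ X.parent xe = none ∧ r? = some r ∧ e = Sum.inr r) ∨
    (∃ ye p, cls g a = Sum.inr ye ∧ Y.parent ye = some p ∧ e = Sum.inr p) := by
  unfold tpar at h
  rcases hc : cls g a with xe | ye <;> rw [hc] at h <;>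
    simp only [Sum.elim_inl, Sum.elim_inr] at h
  · rcases hp : X.parent xe with - | p <;> rw [hp] at h
    · rcases hr : r? with - | r <;> rw [hr] at h <;> simp at h
      exact Or.inr (Or.inl ⟨xe, r, rfl, hp, rfl, h.symm⟩)
    · simp at h
      exact Or.inl ⟨xe, p, rfl, hp, h.symm⟩
  · rcases hp : Y.parent ye with - | p <;> rw [hp] at h <;> simp at h
    exact Or.inr (Or.inr ⟨ye, p, rfl, hp, h.symm⟩)

variable (f : Z ⟶ X) (g : Z ⟶ Y)

private lemma tpar_mapY (hgV : Function.Injective g.onV) (r? : Option Y.E)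
    (hXtop : ∀ v, X.parent (Sum.inl (f.onV v)) = none)
    (hYpar : ∀ v, Y.parent (Sum.inl (g.onV v)) = r?)
    {a : Y.V ⊕ Y.E} {p : Y.E} (hp : Y.parent a = some p) :
    tpar g r? (Sum.map (gi f g) Sum.inr a) = some (Sum.inr p) := by
  rcases a with yv | e
  · by_cases hy : ∃ v, g.onV v = yv
    · obtain ⟨v, rfl⟩ := hy
      show tpar g r? (Sum.inl (gi f g (g.onV v))) = _
      rw [gi_glued f g hgV v]
      unfold tpar cls
      simp only [Sum.elim_inl]
      rw [hXtop v]
      rw [hYpar v] at hp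
      rw [hp]
      rfl
    · show tpar g r? (Sum.inl (gi f g yv)) = _
      rw [gi_pure f g hy]
      unfold tpar cls
      simp only [Sum.elim_inr]
      rw [hp]
      rfl
  · show tpar g r? (Sum.inr (Sum.inr e)) = _
    unfold tpar cls
    simp only [Sum.elim_inr]
    rw [hp]
    rfl

private lemma glue (hZE : IsEmpty Z.E)
    (hfV : Function.Injective f.onV) (hgV : Function.Injective g.onV)
    (r? : Option Y.E) (C : Y.V ⊕ Y.E → Prop)
    (hXtop : ∀ v, X.parent (Sum.inl (f.onV v)) = none)
    (hYpar : ∀ v, Y.parent (Sum.inl (g.onV v)) = r?)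
    (hC1 : ∀ a b, C a → Y.cons a b → C b)
    (hC2 : ∀ a b, C a → C b → Y.cons a b)
    (hC3 : ∀ b, C b → ∃ r, r? = some r ∧ Y.parent b = some r)
    (hCg : ∀ v b, Y.cons (Sum.inl (g.onV v)) b → C b)
    (hnt : ∀ r, r? = some r → ∃ a b, Y.parent a = some r ∧ Y.parent b = some r ∧
      ¬ Y.cons a b ∧ (¬ ∃ v, b = Sum.inl (g.onV v)) ∧
      ((∃ v, a = Sum.inl (g.onV v)) → ¬ C b)) :
    ∃ (T : EHyp σ) (jX : X ⟶ T) (jY : Y ⟶ T),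
      f ≫ jX = g ≫ jY ∧ Function.Injective jX.onV ∧ Function.Injective jX.onE ∧
      Function.Injective jY.onV ∧ Function.Injective jY.onE := by
  classical
  -- the glued e-hypergraph
  refine ⟨{
    V := X.V ⊕ GluedV g
    E := X.E ⊕ Y.E
    fintV := by
      have : Fintype (GluedV g) := Fintype.ofFinite _
      infer_instance
    fintE := by infer_instance
    src := Sum.elim (fun e => (X.src e).map Sum.inl) (fun e => (Y.src e).map (gi f g))
    tgt := Sum.elim (fun e => (X.tgt e).map Sum.inl) (fun e => (Y.tgt e).map (gi f g))
    lbl := Sum.elim X.lbl Y.lbl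
    parent := tpar g r?
    cons := tcons g r? C
    lbl_ar := by
      rintro (e | e) gen h <;> simp only [Sum.elim_inl, Sum.elim_inr] at h ⊢
      · simpa [List.length_map] using X.lbl_ar e gen h
      · simpa [List.length_map] using Y.lbl_ar e gen h
    parent_hier := by
      intro x e h
      rcases tpar_eq_some g r? h with ⟨xe, p, hc, hp, rfl⟩ | ⟨xe, r, hc, hp, hr, rfl⟩ |
        ⟨ye, p, hc, hp, rfl⟩
      · simpa using X.parent_hier xe p hp
      · obtain ⟨a, b, hpa, -, -, -, -⟩ := hnt r hr
        simpa using Y.parent_hier a r hpa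
      · simpa using Y.parent_hier ye p hp
    acyclic_parent := by
      intro x hx
      have s2 : ∀ (a b : (X.V ⊕ GluedV g) ⊕ (X.E ⊕ Y.E)),
          (∃ e, a = Sum.inr e ∧ tpar g r? b = some e) → ∀ xa, cls g a = Sum.inl xa →
          ∃ xb, cls g b = Sum.inl xb ∧ (∃ e, xa = Sum.inr e ∧ X.parent xb = some e) := by
        rintro a b ⟨e, rfl, hpb⟩ xa hca
        rcases e with eX | eY
        · have hxa : xa = Sum.inr eX := by
            have : cls (X := X) g (Sum.inr (Sum.inl eX)) = Sum.inl (Sum.inr eX) := rfl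
            rw [this] at hca
            exact (Sum.inl.inj hca).symm
          subst hxa
          rcases tpar_eq_some g r? hpb with ⟨xb, p, hc, hp, he⟩ | ⟨_, _, _, _, _, he⟩ |
            ⟨_, _, _, _, he⟩
          · obtain rfl : eX = p := Sum.inl.inj he
            exact ⟨xb, hc, eX, rfl, hp⟩
          · exact absurd he (by simp)
          · exact absurd he (by simp)
        · exact absurd hca (by simp [cls])
      have s1 : ∀ (a b : (X.V ⊕ GluedV g) ⊕ (X.E ⊕ Y.E)),
          (∃ e, a = Sum.inr e ∧ tpar g r? b = some e) → ∀ yb, cls g b = Sum.inr yb →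
          ∃ ya, cls g a = Sum.inr ya ∧ (∃ e, ya = Sum.inr e ∧ Y.parent yb = some e) := by
        rintro a b ⟨e, rfl, hpb⟩ yb hcb
        have hpb' : (Y.parent yb).map Sum.inr = some e := by
          unfold tpar at hpb
          rw [hcb] at hpb
          simpa using hpb
        rcases hY : Y.parent yb with - | p <;> rw [hY] at hpb'
        · simp at hpb'
        · simp at hpb'
          subst hpb'
          exact ⟨Sum.inr p, rfl, p, rfl, rfl⟩
      rcases hcx : cls g x with xe | ye
      · have key : ∀ (a b : (X.V ⊕ GluedV g) ⊕ (X.E ⊕ Y.E)),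
            Relation.TransGen (fun a b => ∃ e, a = Sum.inr e ∧ tpar g r? b = some e) a b →
            ∀ xa, cls g a = Sum.inl xa → ∃ xb, cls g b = Sum.inl xb ∧
              Relation.TransGen
                (fun a b : X.V ⊕ X.E => ∃ e, a = Sum.inr e ∧ X.parent b = some e) xa xb := by
          intro a b h
          induction h with
          | single h =>
            intro xa hca
            obtain ⟨xb, h1, h2⟩ := s2 _ _ h xa hca
            exact ⟨xb, h1, Relation.TransGen.single h2⟩
          | tail h1 h2 ih =>
            intro xa hca
            obtain ⟨xc, hc1, htg⟩ := ih xa hca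
            obtain ⟨xb, hb1, hstep⟩ := s2 _ _ h2 xc hc1
            exact ⟨xb, hb1, htg.tail hstep⟩
        obtain ⟨xb, hcb, htg⟩ := key _ _ hx xe hcx
        rw [hcx] at hcb
        obtain rfl : xe = xb := Sum.inl.inj hcb
        exact X.acyclic_parent xe htg
      · have key : ∀ (a b : (X.V ⊕ GluedV g) ⊕ (X.E ⊕ Y.E)),
            Relation.TransGen (fun a b => ∃ e, a = Sum.inr e ∧ tpar g r? b = some e) a b →
            ∀ yb, cls g b = Sum.inr yb → ∃ ya, cls g a = Sum.inr ya ∧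
              Relation.TransGen
                (fun a b : Y.V ⊕ Y.E => ∃ e, a = Sum.inr e ∧ Y.parent b = some e) ya yb := by
          intro a b h
          induction h with
          | single h =>
            intro yb hcb
            obtain ⟨ya, h1, h2⟩ := s1 _ _ h yb hcb
            exact ⟨ya, h1, Relation.TransGen.single h2⟩
          | tail h1 h2 ih =>
            intro yb hcb
            obtain ⟨yc, hc1, hstep⟩ := s1 _ _ h2 yb hcb
            obtain ⟨ya, ha, htg⟩ := ih yc hc1
            exact ⟨ya, ha, htg.tail hstep⟩
        obtain ⟨ya, hca, htg⟩ := key _ _ hx ye hcx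
        rw [hcx] at hca
        obtain rfl : ye = ya := Sum.inr.inj hca
        exact Y.acyclic_parent ye htg
    parent_conn := by
      rintro (eX | eY) v hv
      · simp only [Sum.elim_inl, List.mem_map] at hv
        obtain ⟨x, hx, rfl⟩ : ∃ x, (x ∈ X.src eX ∨ x ∈ X.tgt eX) ∧ Sum.inl x = v := by
          rcases hv with ⟨x, hx, rfl⟩ | ⟨x, hx, rfl⟩
          · exact ⟨x, Or.inl hx, rfl⟩
          · exact ⟨x, Or.inr hx, rfl⟩
        have hpc := X.parent_conn eX x hx
        show tpar g r? (Sum.inl (Sum.inl x)) = tpar g r? (Sum.inr (Sum.inl eX))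
        unfold tpar cls
        simp only [Sum.elim_inl]
        rw [hpc]
      · simp only [Sum.elim_inr, List.mem_map] at hv
        obtain ⟨y, hy, rfl⟩ : ∃ y, (y ∈ Y.src eY ∨ y ∈ Y.tgt eY) ∧ gi f g y = v := by
          rcases hv with ⟨y, hy, rfl⟩ | ⟨y, hy, rfl⟩
          · exact ⟨y, Or.inl hy, rfl⟩
          · exact ⟨y, Or.inr hy, rfl⟩
        have hpc := Y.parent_conn eY y hy
        by_cases hglue : ∃ w, g.onV w = y
        · obtain ⟨w, rfl⟩ := hglue
          show tpar g r? (Sum.inl (gi f g (g.onV w))) = tpar g r? (Sum.inr (Sum.inr eY))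
          rw [gi_glued f g hgV w]
          unfold tpar cls
          simp only [Sum.elim_inl, Sum.elim_inr]
          rw [hXtop w, ← hpc, hYpar w]
          rfl
        · show tpar g r? (Sum.inl (gi f g y)) = tpar g r? (Sum.inr (Sum.inr eY))
          rw [gi_pure f g hglue]
          unfold tpar cls
          simp only [Sum.elim_inl, Sum.elim_inr]
          rw [hpc]
    maximal_lbl := by
      rintro (eX | eY) he
      · simp only [Sum.elim_inl]
        apply X.maximal_lbl
        intro x hx
        apply he (Sum.map Sum.inl Sum.inl x)
        unfold tpar
        rw [cls_mapX]
        simp only [Sum.elim_inl]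
        rw [hx]
        rfl
      · simp only [Sum.elim_inr]
        apply Y.maximal_lbl
        intro y hy
        apply he (Sum.map (gi f g) Sum.inr y)
        exact tpar_mapY f g hgV r? hXtop hYpar hy
    cons_symm := by
      intro x y h
      unfold tcons at h ⊢
      rcases hx : cls g x with xa | ya <;> rcases hy : cls g y with xb | yb <;>
        rw [hx, hy] at h <;>
        simp only [Sum.elim_inl, Sum.elim_inr] at h ⊢
      · rcases h with h | ⟨h1, h2, h3⟩
        · exact Or.inl (X.cons_symm h)
        · exact Or.inr ⟨h2, h1, h3⟩
      · exact h
      · exact h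
      · exact Y.cons_symm h
    cons_trans := by
      intro x y z hxy hyz
      unfold tcons at hxy hyz ⊢
      rcases hx : cls g x with xa | ya <;> rcases hy : cls g y with xb | yb <;>
        rcases hz : cls g z with xc | yc <;>
        rw [hx, hy] at hxy <;> rw [hy, hz] at hyz <;>
        simp only [Sum.elim_inl, Sum.elim_inr] at hxy hyz ⊢
      · -- LLL
        rcases hxy with h | ⟨h1, h2, h3⟩ <;> rcases hyz with h' | ⟨h1', h2', h3'⟩
        · exact Or.inl (X.cons_trans h h')
        · obtain ⟨e, -, he⟩ := X.cons_parent h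
          rw [he] at h1'
          cases h1'
        · obtain ⟨e, he, -⟩ := X.cons_parent h'
          rw [he] at h2
          cases h2
        · exact Or.inr ⟨h1, h2', h3⟩
      · -- LLR
        rcases hxy with h | ⟨h1, h2, h3⟩
        · obtain ⟨e, -, he⟩ := X.cons_parent h
          rw [he] at hyz
          cases hyz.1
        · exact ⟨h1, hyz.2⟩
      · -- LRL
        refine Or.inr ⟨hxy.1, hyz.1, ?_⟩
        obtain ⟨r, hr, -⟩ := hC3 yb hxy.2
        rw [hr]
        rfl
      · -- LRR
        exact ⟨hxy.1, hC1 yb yc hxy.2 hyz⟩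
      · -- RLL
        rcases hyz with h | ⟨h1, h2, h3⟩
        · obtain ⟨e, he, -⟩ := X.cons_parent h
          rw [he] at hxy
          cases hxy.1
        · exact ⟨h2, hxy.2⟩
      · -- RLR
        exact hC2 ya yc hxy.2 hyz.2
      · -- RRL
        exact ⟨hyz.1, hC1 yb ya hyz.2 (Y.cons_symm hxy)⟩
      · exact Y.cons_trans hxy hyz
    cons_parent := by
      intro x y h
      unfold tcons at h
      rcases hx : cls g x with xa | ya <;> rcases hy : cls g y with xb | yb <;>
        rw [hx, hy] at h <;> simp only [Sum.elim_inl, Sum.elim_inr] at h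
      · rcases h with h | ⟨h1, h2, h3⟩
        · obtain ⟨e, he1, he2⟩ := X.cons_parent h
          refine ⟨Sum.inl e, ?_, ?_⟩ <;> unfold tpar <;> [rw [hx]; rw [hy]] <;>
            simp only [Sum.elim_inl] <;> [rw [he1]; rw [he2]] <;> rfl
        · obtain ⟨r, hr⟩ := Option.isSome_iff_exists.mp h3
          refine ⟨Sum.inr r, ?_, ?_⟩ <;> unfold tpar <;> [rw [hx]; rw [hy]] <;>
            simp only [Sum.elim_inl] <;> [rw [h1]; rw [h2]] <;> rw [hr] <;> rfl
      · obtain ⟨r, hr, hYp⟩ := hC3 yb h.2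
        refine ⟨Sum.inr r, ?_, ?_⟩ <;> unfold tpar <;> [rw [hx]; rw [hy]] <;>
          simp only [Sum.elim_inl, Sum.elim_inr]
        · rw [h.1, hr]
          rfl
        · rw [hYp]
          rfl
      · obtain ⟨r, hr, hYp⟩ := hC3 ya h.2
        refine ⟨Sum.inr r, ?_, ?_⟩ <;> unfold tpar <;> [rw [hx]; rw [hy]] <;>
          simp only [Sum.elim_inl, Sum.elim_inr]
        · rw [hYp]
          rfl
        · rw [h.1, hr]
          rfl
      · obtain ⟨e, he1, he2⟩ := Y.cons_parent h
        refine ⟨Sum.inr e, ?_, ?_⟩ <;> unfold tpar <;> [rw [hx]; rw [hy]] <;>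
          simp only [Sum.elim_inr] <;> [rw [he1]; rw [he2]] <;> rfl
    cons_refl := by
      intro x e h
      rcases tpar_eq_some g r? h with ⟨xe, p, hc, hp, -⟩ | ⟨xe, r, hc, hp, hr, -⟩ |
        ⟨ye, p, hc, hp, -⟩ <;> unfold tcons <;> rw [hc] <;>
        simp only [Sum.elim_inl, Sum.elim_inr]
      · exact Or.inl (X.cons_refl xe p hp)
      · exact Or.inr ⟨hp, hp, by rw [hr]; rfl⟩
      · exact Y.cons_refl ye p hp
    cons_conn := by
      rintro (eX | eY) v hv hpar
      · simp only [Sum.elim_inl, List.mem_map] at hv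
        obtain ⟨x, hx, rfl⟩ : ∃ x, (x ∈ X.src eX ∨ x ∈ X.tgt eX) ∧ Sum.inl x = v := by
          rcases hv with ⟨x, hx, rfl⟩ | ⟨x, hx, rfl⟩
          · exact ⟨x, Or.inl hx, rfl⟩
          · exact ⟨x, Or.inr hx, rfl⟩
        unfold tcons
        have hc1 : cls (X := X) g (Sum.inl (Sum.inl x)) = Sum.inl (Sum.inl x) := rfl
        have hc2 : cls (X := X) g (Sum.inr (Sum.inl eX)) = Sum.inl (Sum.inr eX) := rfl
        rw [hc1, hc2]
        simp only [Sum.elim_inl]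
        rcases hp : X.parent (Sum.inl x) with - | p
        · refine Or.inr ⟨rfl, by rw [← X.parent_conn eX x hx]; exact hp, ?_⟩
          obtain ⟨pp, hpp⟩ := hpar
          unfold tpar at hpp
          rw [hc1] at hpp
          simp only [Sum.elim_inl] at hpp
          rw [hp] at hpp
          simp only [Option.elim] at hpp
          rcases hr : r? with - | r
          · rw [hr] at hpp
            cases hpp
          · rfl
        · exact Or.inl (X.cons_conn eX x hx ⟨p, hp⟩)
      · simp only [Sum.elim_inr, List.mem_map] at hv
        obtain ⟨y, hy, rfl⟩ : ∃ y, (y ∈ Y.src eY ∨ y ∈ Y.tgt eY) ∧ gi f g y = v := by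
          rcases hv with ⟨y, hy, rfl⟩ | ⟨y, hy, rfl⟩
          · exact ⟨y, Or.inl hy, rfl⟩
          · exact ⟨y, Or.inr hy, rfl⟩
        by_cases hglue : ∃ w, g.onV w = y
        · obtain ⟨w, rfl⟩ := hglue
          rw [gi_glued f g hgV w] at hpar ⊢
          unfold tcons
          have hc1 : cls (X := X) g (Sum.inl (Sum.inl (f.onV w))) =
              Sum.inl (Sum.inl (f.onV w)) := rfl
          have hc2 : cls (X := X) g (Sum.inr (Sum.inr eY)) = Sum.inr (Sum.inr eY) := rfl
          rw [hc1, hc2]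
          simp only [Sum.elim_inl, Sum.elim_inr]
          refine ⟨hXtop w, ?_⟩
          obtain ⟨pp, hpp⟩ := hpar
          unfold tpar at hpp
          rw [hc1] at hpp
          simp only [Sum.elim_inl] at hpp
          rw [hXtop w] at hpp
          simp only [Option.elim] at hpp
          rcases hr : r? with - | r
          · rw [hr] at hpp
            cases hpp
          · have hw : Y.parent (Sum.inl (g.onV w)) = some r := by rw [hYpar w, hr]
            exact hCg w _ (Y.cons_conn eY (g.onV w) hy ⟨r, hw⟩)
        · rw [gi_pure f g hglue] at hpar ⊢
          unfold tcons
          have hc1 : cls (X := X) g (Sum.inl (Sum.inr ⟨y, hglue⟩)) = Sum.inr (Sum.inl y) := rfl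
          have hc2 : cls (X := X) g (Sum.inr (Sum.inr eY)) = Sum.inr (Sum.inr eY) := rfl
          rw [hc1, hc2]
          simp only [Sum.elim_inr]
          obtain ⟨pp, hpp⟩ := hpar
          unfold tpar at hpp
          rw [hc1] at hpp
          simp only [Sum.elim_inr] at hpp
          rcases hp : Y.parent (Sum.inl y) with - | p
          · rw [hp] at hpp
            cases hpp
          · exact Y.cons_conn eY y hy ⟨p, hp⟩
    cons_nontotal := by
      rintro (eX | eY) ⟨x, hx⟩
      · rcases tpar_eq_some g r? hx with ⟨xe, p, hc, hp, he⟩ | ⟨_, _, _, _, _, he⟩ |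
          ⟨_, _, _, _, he⟩
        · obtain rfl : eX = p := Sum.inl.inj he
          obtain ⟨a, b, hpa, hpb, hab⟩ := X.cons_nontotal eX ⟨xe, hp⟩
          refine ⟨Sum.map Sum.inl Sum.inl a, Sum.map Sum.inl Sum.inl b, ?_, ?_, ?_⟩
          · unfold tpar
            rw [cls_mapX]
            simp only [Sum.elim_inl]
            rw [hpa]
            rfl
          · unfold tpar
            rw [cls_mapX]
            simp only [Sum.elim_inl]
            rw [hpb]
            rfl
          · unfold tcons
            rw [cls_mapX, cls_mapX]
            simp only [Sum.elim_inl]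
            rintro (h | ⟨h1, -, -⟩)
            · exact hab h
            · rw [hpa] at h1
              cases h1
        · exact absurd he (by simp)
        · exact absurd he (by simp)
      · by_cases hre : r? = some eY
        · obtain ⟨a, b, hpa, hpb, hab, hbng, himp⟩ := hnt eY hre
          refine ⟨Sum.map (gi f g) Sum.inr a, Sum.map (gi f g) Sum.inr b,
            tpar_mapY f g hgV r? hXtop hYpar hpa, tpar_mapY f g hgV r? hXtop hYpar hpb, ?_⟩
          have hcb : cls g (Sum.map (gi f g) Sum.inr b) = Sum.inr b := by
            rcases b with yv | e
            · have hb' : ¬ ∃ v, g.onV v = yv := by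
                rintro ⟨v, hv⟩
                exact hbng ⟨v, by rw [hv]⟩
              show cls g (Sum.inl (gi f g yv)) = _
              rw [gi_pure f g hb']
              rfl
            · rfl
          by_cases hag : ∃ v, a = Sum.inl (g.onV v)
          · obtain ⟨v, rfl⟩ := hag
            have hca : cls g (Sum.map (gi f g) Sum.inr (Sum.inl (g.onV v))) =
                Sum.inl (Sum.inl (f.onV v)) := by
              show cls g (Sum.inl (gi f g (g.onV v))) = _
              rw [gi_glued f g hgV v]
              rfl
            unfold tcons
            rw [hca, hcb]
            simp only [Sum.elim_inl, Sum.elim_inr]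
            rintro ⟨-, hCb⟩
            exact himp ⟨v, rfl⟩ hCb
          · have hca : cls g (Sum.map (gi f g) Sum.inr a) = Sum.inr a := by
              rcases a with yv | e
              · have ha' : ¬ ∃ v, g.onV v = yv := by
                  rintro ⟨v, hv⟩
                  exact hag ⟨v, by rw [hv]⟩
                show cls g (Sum.inl (gi f g yv)) = _
                rw [gi_pure f g ha']
                rfl
              · rfl
            unfold tcons
            rw [hca, hcb]
            simp only [Sum.elim_inr]
            exact hab
        · rcases tpar_eq_some g r? hx with ⟨_, _, _, _, he⟩ | ⟨_, r, _, _, hr, he⟩ |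
            ⟨ye, p, hc, hp, he⟩
          · exact absurd he (by simp)
          · obtain rfl : eY = r := Sum.inr.inj he
            exact absurd hr hre
          · obtain rfl : eY = p := Sum.inr.inj he
            obtain ⟨a, b, hpa, hpb, hab⟩ := Y.cons_nontotal eY ⟨ye, hp⟩
            have hag : ¬ ∃ v, a = Sum.inl (g.onV v) := by
              rintro ⟨v, rfl⟩
              rw [hYpar v] at hpa
              exact hre hpa
            have hbg : ¬ ∃ v, b = Sum.inl (g.onV v) := by
              rintro ⟨v, rfl⟩
              rw [hYpar v] at hpb
              exact hre hpb
            have hca : cls g (Sum.map (gi f g) Sum.inr a) = Sum.inr a := by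
              rcases a with yv | e
              · have ha' : ¬ ∃ v, g.onV v = yv := by
                  rintro ⟨v, hv⟩
                  exact hag ⟨v, by rw [hv]⟩
                show cls g (Sum.inl (gi f g yv)) = _
                rw [gi_pure f g ha']
                rfl
              · rfl
            have hcb : cls g (Sum.map (gi f g) Sum.inr b) = Sum.inr b := by
              rcases b with yv | e
              · have hb' : ¬ ∃ v, g.onV v = yv := by
                  rintro ⟨v, hv⟩
                  exact hbg ⟨v, by rw [hv]⟩
                show cls g (Sum.inl (gi f g yv)) = _
                rw [gi_pure f g hb']
                rfl
              · rfl
            refine ⟨Sum.map (gi f g) Sum.inr a, Sum.map (gi f g) Sum.inr b,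
              tpar_mapY f g hgV r? hXtop hYpar hpa, tpar_mapY f g hgV r? hXtop hYpar hpb, ?_⟩
            unfold tcons
            rw [hca, hcb]
            simp only [Sum.elim_inr]
            exact hab
  }, {
    onV := Sum.inl
    onE := Sum.inl
    map_src := fun e => rfl
    map_tgt := fun e => rfl
    map_lbl := fun e => rfl
    map_parent := by
      intro x e h
      show tpar g r? (Sum.map Sum.inl Sum.inl x) = some (Sum.inl e)
      unfold tpar
      rw [cls_mapX]
      simp only [Sum.elim_inl]
      rw [h]
      rfl
    map_cons := by
      intro x y h
      show tcons g r? C (Sum.map Sum.inl Sum.inl x) (Sum.map Sum.inl Sum.inl y)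
      unfold tcons
      rw [cls_mapX, cls_mapX]
      simp only [Sum.elim_inl]
      exact Or.inl h
  }, {
    onV := gi f g
    onE := Sum.inr
    map_src := fun e => rfl
    map_tgt := fun e => rfl
    map_lbl := fun e => rfl
    map_parent := by
      intro x e h
      exact tpar_mapY f g hgV r? hXtop hYpar h
    map_cons := by
      intro x y h
      show tcons g r? C (Sum.map (gi f g) Sum.inr x) (Sum.map (gi f g) Sum.inr y)
      have key : ∀ z : Y.V ⊕ Y.E, (∃ v, z = Sum.inl (g.onV v)) ∨
          cls g (Sum.map (gi f g) Sum.inr z) = Sum.inr z := by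
        rintro (yv | e)
        · by_cases hz : ∃ v, g.onV v = yv
          · obtain ⟨v, rfl⟩ := hz
            exact Or.inl ⟨v, rfl⟩
          · refine Or.inr ?_
            show cls g (Sum.inl (gi f g yv)) = _
            rw [gi_pure f g hz]
            rfl
        · exact Or.inr rfl
      unfold tcons
      rcases key x with ⟨v, rfl⟩ | hcx <;> rcases key y with ⟨w, rfl⟩ | hcy
      · have hcx' : cls g (Sum.map (gi f g) Sum.inr (Sum.inl (g.onV v))) =
            Sum.inl (Sum.inl (f.onV v)) := by
          show cls g (Sum.inl (gi f g (g.onV v))) = _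
          rw [gi_glued f g hgV v]
          rfl
        have hcy' : cls g (Sum.map (gi f g) Sum.inr (Sum.inl (g.onV w))) =
            Sum.inl (Sum.inl (f.onV w)) := by
          show cls g (Sum.inl (gi f g (g.onV w))) = _
          rw [gi_glued f g hgV w]
          rfl
        rw [hcx', hcy']
        simp only [Sum.elim_inl]
        refine Or.inr ⟨hXtop v, hXtop w, ?_⟩
        obtain ⟨e, he, -⟩ := Y.cons_parent h
        rw [hYpar v] at he
        rw [he]
        rfl
      · have hcx' : cls g (Sum.map (gi f g) Sum.inr (Sum.inl (g.onV v))) =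
            Sum.inl (Sum.inl (f.onV v)) := by
          show cls g (Sum.inl (gi f g (g.onV v))) = _
          rw [gi_glued f g hgV v]
          rfl
        rw [hcx', hcy]
        simp only [Sum.elim_inl, Sum.elim_inr]
        exact ⟨hXtop v, hCg v y h⟩
      · have hcy' : cls g (Sum.map (gi f g) Sum.inr (Sum.inl (g.onV w))) =
            Sum.inl (Sum.inl (f.onV w)) := by
          show cls g (Sum.inl (gi f g (g.onV w))) = _
          rw [gi_glued f g hgV w]
          rfl
        rw [hcx, hcy']
        simp only [Sum.elim_inl, Sum.elim_inr]
        exact ⟨hXtop w, hCg w x (Y.cons_symm h)⟩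
      · rw [hcx, hcy]
        simp only [Sum.elim_inr]
        exact h
  }, ?_, ?_, ?_, ?_, ?_⟩
  · refine EHypHom.ext' (funext fun v => ?_) (funext fun e => (hZE.false e).elim)
    exact (gi_glued f g hgV v).symm
  · exact fun a b h => Sum.inl.inj h
  · exact fun a b h => Sum.inl.inj h
  · intro y1 y2 h
    replace h : gi f g y1 = gi f g y2 := h
    by_cases h1 : ∃ v, g.onV v = y1 <;> by_cases h2 : ∃ v, g.onV v = y2
    · obtain ⟨v1, rfl⟩ := h1
      obtain ⟨v2, rfl⟩ := h2
      rw [gi_glued f g hgV v1, gi_glued f g hgV v2] at h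
      exact congrArg g.onV (hfV (Sum.inl.inj h))
    · rw [gi_pure f g h2] at h
      obtain ⟨v1, rfl⟩ := h1
      rw [gi_glued f g hgV v1] at h
      cases h
    · rw [gi_pure f g h1] at h
      obtain ⟨v2, rfl⟩ := h2
      rw [gi_glued f g hgV v2] at h
      cases h
    · rw [gi_pure f g h1, gi_pure f g h2] at h
      exact congrArg Subtype.val (Sum.inr.inj h)
  · exact fun a b h => Sum.inr.inj h

end Glue

/-- **Pushout injections of monos are monos.**  Under the hypotheses of the
pushout-existence theorem for `EHyp(σ)` (`Z` discrete; equal parent-sets and equal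
consistency classes of the images of any two vertices of `Z` under each leg; no vertex of
`Z` having a parent under both legs), if both legs `f : Z → X` and `g : Z → Y` are
monomorphisms, then the two injections of any pushout `X +_{f,g} Y` are monomorphisms. -/
theorem EHyp.pushout_inj_mono {σ : MSig} {Z X Y : EHyp σ} (f : Z ⟶ X) (g : Z ⟶ Y)
    (hdiscrete : IsEmpty Z.E)
    (hparentsX : ∀ v w : Z.V, ∀ x,
      X.anc x (Sum.inl (f.onV v)) ↔ X.anc x (Sum.inl (f.onV w)))
    (hparentsY : ∀ v w : Z.V, ∀ y,
      Y.anc y (Sum.inl (g.onV v)) ↔ Y.anc y (Sum.inl (g.onV w)))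
    (hexcl₁ : ∀ v : Z.V, (∃ x, X.anc x (Sum.inl (f.onV v))) →
      ¬ ∃ y, Y.anc y (Sum.inl (g.onV v)))
    (hexcl₂ : ∀ v : Z.V, (∃ y, Y.anc y (Sum.inl (g.onV v))) →
      ¬ ∃ x, X.anc x (Sum.inl (f.onV v)))
    (hconsX : ∀ v w : Z.V, ∀ x,
      X.cons (Sum.inl (f.onV v)) x ↔ X.cons (Sum.inl (f.onV w)) x)
    (hconsY : ∀ v w : Z.V, ∀ y,
      Y.cons (Sum.inl (g.onV v)) y ↔ Y.cons (Sum.inl (g.onV w)) y)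
    (hf : Mono f) (hg : Mono g) :
    ∀ (P : EHyp σ) (inX : X ⟶ P) (inY : Y ⟶ P),
      IsPushout f g inX inY → Mono inX ∧ Mono inY := by
  intro P inX inY hpo
  have hfV := injV_of_mono f hf
  have hgV := injV_of_mono g hg
  have conclude : ∀ (T : EHyp σ) (jX : X ⟶ T) (jY : Y ⟶ T), f ≫ jX = g ≫ jY →
      Mono jX → Mono jY → Mono inX ∧ Mono inY := by
    intro T jX jY hcomm hmX hmY
    haveI h1 : Mono (inX ≫ hpo.desc jX jY hcomm) := by
      rw [hpo.inl_desc]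
      exact hmX
    haveI h2 : Mono (inY ≫ hpo.desc jX jY hcomm) := by
      rw [hpo.inr_desc]
      exact hmY
    exact ⟨mono_of_mono inX (hpo.desc jX jY hcomm), mono_of_mono inY (hpo.desc jX jY hcomm)⟩
  by_cases h1 : ∃ v r, Y.parent (Sum.inl (g.onV v)) = some r
  · -- glued vertices have a common parent in Y, hence none in X
    obtain ⟨v₁, r, hr⟩ := h1
    have hYall : ∀ v, Y.parent (Sum.inl (g.onV v)) = some r := fun v =>
      parent_eq_of_anc_iff Y (fun x => hparentsY v₁ v x) hr
    have hXnone : ∀ v, X.parent (Sum.inl (f.onV v)) = none := by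
      intro v
      rcases hX : X.parent (Sum.inl (f.onV v)) with - | q
      · rfl
      · exact absurd ⟨_, anc_of_parent X hX⟩
          (hexcl₂ v ⟨_, anc_of_parent Y (hYall v)⟩)
    have hC3 : ∀ b, Y.cons (Sum.inl (g.onV v₁)) b →
        ∃ r', (some r : Option Y.E) = some r' ∧ Y.parent b = some r' := by
      intro b hb
      obtain ⟨e, he1, he2⟩ := Y.cons_parent hb
      rw [hYall v₁] at he1
      refine ⟨r, rfl, ?_⟩
      rwa [← Option.some.inj he1] at he2
    have hnt : ∀ r', (some r : Option Y.E) = some r' → ∃ a b, Y.parent a = some r' ∧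
        Y.parent b = some r' ∧ ¬ Y.cons a b ∧ (¬ ∃ v, b = Sum.inl (g.onV v)) ∧
        ((∃ v, a = Sum.inl (g.onV v)) → ¬ Y.cons (Sum.inl (g.onV v₁)) b) := by
      intro r' hr'
      obtain rfl : r = r' := Option.some.inj hr'
      obtain ⟨a, b, hpa, hpb, hab⟩ := Y.cons_nontotal r ⟨_, hYall v₁⟩
      by_cases hbg : ∃ v, b = Sum.inl (g.onV v)
      · obtain ⟨w, rfl⟩ := hbg
        have hag : ¬ ∃ v, a = Sum.inl (g.onV v) := by
          rintro ⟨v, rfl⟩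
          exact hab ((hconsY v w _).mpr (Y.cons_refl _ r (hYall w)))
        refine ⟨Sum.inl (g.onV w), a, hpb, hpa, fun hc => hab (Y.cons_symm hc), hag, ?_⟩
        intro _ hCa
        exact hab (Y.cons_symm ((hconsY w v₁ a).mpr hCa))
      · refine ⟨a, b, hpa, hpb, hab, hbg, ?_⟩
        rintro ⟨v, rfl⟩ hCb
        exact hab ((hconsY v v₁ b).mpr hCb)
    obtain ⟨T, jX, jY, hcomm, hi1, hi2, hi3, hi4⟩ := glue f g hdiscrete hfV hgV (some r)
      (fun b => Y.cons (Sum.inl (g.onV v₁)) b) hXnone hYall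
      (fun a b ha hab => Y.cons_trans ha hab)
      (fun a b ha hb => Y.cons_trans (Y.cons_symm ha) hb)
      hC3
      (fun v b h => (hconsY v₁ v b).mpr h)
      hnt
    exact conclude T jX jY hcomm (mono_of_inj jX hi1 hi2) (mono_of_inj jY hi3 hi4)
  · have hYnone : ∀ v, Y.parent (Sum.inl (g.onV v)) = none := by
      intro v
      rcases hY : Y.parent (Sum.inl (g.onV v)) with - | q
      · rfl
      · exact absurd ⟨v, q, hY⟩ h1
    by_cases h2 : ∃ v q, X.parent (Sum.inl (f.onV v)) = some q
    · -- glued vertices have a common parent in X; apply `glue` with the roles swapped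
      obtain ⟨v₁, q, hq⟩ := h2
      have hXall : ∀ v, X.parent (Sum.inl (f.onV v)) = some q := fun v =>
        parent_eq_of_anc_iff X (fun x => hparentsX v₁ v x) hq
      have hC3 : ∀ b, X.cons (Sum.inl (f.onV v₁)) b →
          ∃ r', (some q : Option X.E) = some r' ∧ X.parent b = some r' := by
        intro b hb
        obtain ⟨e, he1, he2⟩ := X.cons_parent hb
        rw [hXall v₁] at he1
        refine ⟨q, rfl, ?_⟩
        rwa [← Option.some.inj he1] at he2
      have hnt : ∀ r', (some q : Option X.E) = some r' → ∃ a b, X.parent a = some r' ∧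
          X.parent b = some r' ∧ ¬ X.cons a b ∧ (¬ ∃ v, b = Sum.inl (f.onV v)) ∧
          ((∃ v, a = Sum.inl (f.onV v)) → ¬ X.cons (Sum.inl (f.onV v₁)) b) := by
        intro r' hr'
        obtain rfl : q = r' := Option.some.inj hr'
        obtain ⟨a, b, hpa, hpb, hab⟩ := X.cons_nontotal q ⟨_, hXall v₁⟩
        by_cases hbg : ∃ v, b = Sum.inl (f.onV v)
        · obtain ⟨w, rfl⟩ := hbg
          have hag : ¬ ∃ v, a = Sum.inl (f.onV v) := by
            rintro ⟨v, rfl⟩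
            exact hab ((hconsX v w _).mpr (X.cons_refl _ q (hXall w)))
          refine ⟨Sum.inl (f.onV w), a, hpb, hpa, fun hc => hab (X.cons_symm hc), hag, ?_⟩
          intro _ hCa
          exact hab (X.cons_symm ((hconsX w v₁ a).mpr hCa))
        · refine ⟨a, b, hpa, hpb, hab, hbg, ?_⟩
          rintro ⟨v, rfl⟩ hCb
          exact hab ((hconsX v v₁ b).mpr hCb)
      obtain ⟨T, jY, jX, hcomm, hi1, hi2, hi3, hi4⟩ := glue g f hdiscrete hgV hfV (some q)
        (fun b => X.cons (Sum.inl (f.onV v₁)) b) hYnone hXall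
        (fun a b ha hab => X.cons_trans ha hab)
        (fun a b ha hb => X.cons_trans (X.cons_symm ha) hb)
        hC3
        (fun v b h => (hconsX v₁ v b).mpr h)
        hnt
      exact conclude T jX jY hcomm.symm (mono_of_inj jX hi3 hi4) (mono_of_inj jY hi1 hi2)
    · -- no glued vertex has a parent on either side
      have hXnone : ∀ v, X.parent (Sum.inl (f.onV v)) = none := by
        intro v
        rcases hX : X.parent (Sum.inl (f.onV v)) with - | q
        · rfl
        · exact absurd ⟨v, q, hX⟩ h2
      obtain ⟨T, jX, jY, hcomm, hi1, hi2, hi3, hi4⟩ := glue f g hdiscrete hfV hgV none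
        (fun _ => False) hXnone hYnone
        (fun a b ha _ => ha.elim)
        (fun a b ha _ => ha.elim)
        (fun b hb => hb.elim)
        (fun v b h => by
          obtain ⟨e, he, -⟩ := Y.cons_parent h
          rw [hYnone v] at he
          cases he)
        (fun r hr => by cases hr)
      exact conclude T jX jY hcomm (mono_of_inj jX hi1 hi2) (mono_of_inj jY hi3 hi4)
end

section
/- Let Σ be a monoidal signature. Two cospans n →f G ←g m and n →f' G' ←g' m in Hyp(Σ) are isomorphic as cospans if and only if the corresponding extended cospans n → n → G ← m ← m and n → n → G' ← m ← m in EHyp(Σ) (with identity-like external legs, so that the composites of the legs equal f, g and f', g' respectively, and with G, G' regarded as e-hypergraphs with empty child and consistency relations) are isomorphic as extended cospans. Consequently there is a faithful identity-on-objects functor E : HypI(Σ) → EHypI(Σ). -/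
open CategoryTheory

variable (σ : MSig)

/-- A plain `σ`-labelled hypergraph (no hierarchical structure). -/
structure Hyp : Type 1 where
  V : Type
  E : Type
  [fintV : Fintype V]
  [fintE : Fintype E]
  src : E → List V
  tgt : E → List V
  lbl : E → σ.Gen
  lbl_ar : ∀ e : E, (src e).length = σ.ar (lbl e) ∧ (tgt e).length = σ.coar (lbl e)

attribute [instance] Hyp.fintV Hyp.fintE

/-- Homomorphisms of plain hypergraphs. -/
structure HypHom (G H : Hyp σ) : Type where
  onV : G.V → H.V
  onE : G.E → H.E
  map_src : ∀ e, H.src (onE e) = (G.src e).map onV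
  map_tgt : ∀ e, H.tgt (onE e) = (G.tgt e).map onV
  map_lbl : ∀ e, H.lbl (onE e) = G.lbl e

/-- Isomorphisms of plain hypergraphs. -/
structure HypIso (G H : Hyp σ) : Type where
  hom : HypHom σ G H
  inv : HypHom σ H G
  left_V : ∀ v, inv.onV (hom.onV v) = v
  right_V : ∀ v, hom.onV (inv.onV v) = v
  left_E : ∀ e, inv.onE (hom.onE e) = e
  right_E : ∀ e, hom.onE (inv.onE e) = e

/-- Isomorphisms of e-hypergraphs. -/
structure EHypIso (G H : EHyp σ) : Type where
  hom : EHypHom σ G H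
  inv : EHypHom σ H G
  left_V : ∀ v, inv.onV (hom.onV v) = v
  right_V : ∀ v, hom.onV (inv.onV v) = v
  left_E : ∀ e, inv.onE (hom.onE e) = e
  right_E : ∀ e, hom.onE (inv.onE e) = e

/-- A plain hypergraph regarded as an e-hypergraph with empty child and consistency
relations. -/
def Hyp.toE (G : Hyp σ) : EHyp σ where
  V := G.V
  E := G.E
  src := G.src
  tgt := G.tgt
  lbl e := some (G.lbl e)
  parent _ := none
  cons _ _ := False
  lbl_ar := by intro e g h; cases h; exact G.lbl_ar e
  parent_hier := by intro x e h; cases h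
  acyclic_parent := by
    have key : ∀ x y : G.V ⊕ G.E,
        ¬ Relation.TransGen (fun a b : G.V ⊕ G.E => ∃ e, a = Sum.inr e ∧ none = some e) x y := by
      intro x y h
      induction h with
      | single h => obtain ⟨e, _, h⟩ := h; cases h
      | tail _ h _ => obtain ⟨e, _, h⟩ := h; cases h
    intro x h
    exact key x x h
  parent_conn := by intro e v _; rfl
  maximal_lbl := by intro e _ h; cases h
  cons_symm := by intro x y h; cases h
  cons_trans := by intro x y z h; cases h
  cons_parent := by intro x y h; cases h
  cons_refl := by intro x e h; cases h
  cons_conn := by intro e v _ h; obtain ⟨p, hp⟩ := h; cases hp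
  cons_nontotal := by intro e h; obtain ⟨x, hx⟩ := h; cases hx

/-- A cospan of plain hypergraphs over discrete ordered interfaces `n` and `m`
(a morphism of `HypI(σ)` before quotienting by isomorphism). -/
structure HCospan (n m : ℕ) : Type 1 where
  G : Hyp σ
  i : Fin n → G.V
  o : Fin m → G.V

/-- Isomorphism of cospans of plain hypergraphs. -/
def HCospanIso {σ : MSig} {n m : ℕ} (c d : HCospan σ n m) : Prop :=
  ∃ φ : HypIso σ c.G d.G,
    (∀ k, φ.hom.onV (c.i k) = d.i k) ∧ (∀ k, φ.hom.onV (c.o k) = d.o k)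

/-- An extended cospan of e-hypergraphs
`n → n' → G ← m' ← m` (a morphism of `EHypI(σ)` before quotienting by isomorphism):
external interfaces `n, m`, discrete ordered internal interfaces of sizes `ni, mi`, with the
external legs mono, the external interface consisting of top-level vertices and the strictly
internal interfaces consisting of non-top-level vertices. -/
structure ECospan (n m : ℕ) : Type 1 where
  G : EHyp σ
  ni : ℕ
  mi : ℕ
  fext : Fin n → Fin ni
  fint : Fin ni → G.V
  gext : Fin m → Fin mi
  gint : Fin mi → G.V
  fext_inj : Function.Injective fext
  gext_inj : Function.Injective gext
  ext_in_top : ∀ k, G.parent (Sum.inl (fint (fext k))) = none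
  ext_out_top : ∀ k, G.parent (Sum.inl (gint (gext k))) = none
  strict_in_not_top : ∀ j, (∀ k, fext k ≠ j) → G.parent (Sum.inl (fint j)) ≠ none
  strict_out_not_top : ∀ j, (∀ k, gext k ≠ j) → G.parent (Sum.inl (gint j)) ≠ none

namespace ECospan

variable {σ} {n m : ℕ}

/-- The reflexive closure of the relation induced on the internal input interface by the
consistency relation of the carrier: the partition of the interface into blocks. -/
def SRel (c : ECospan σ n m) (j j' : Fin c.ni) : Prop :=
  j = j' ∨ c.G.cons (Sum.inl (c.fint j)) (Sum.inl (c.fint j'))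

/-- The block partition of the internal output interface. -/
def TRel (c : ECospan σ n m) (j j' : Fin c.mi) : Prop :=
  j = j' ∨ c.G.cons (Sum.inl (c.gint j)) (Sum.inl (c.gint j'))

end ECospan

/-- Isomorphism of extended cospans: isomorphisms of the internal interfaces and of the
carrier commuting with all the legs, such that the interface isomorphisms preserve the order
within each block of the partition induced by the consistency relation. -/
structure ECospanIso {σ : MSig} {n m : ℕ} (c d : ECospan σ n m) : Type where
  α : Fin c.ni ≃ Fin d.ni
  γ : Fin c.mi ≃ Fin d.mi
  iso : EHypIso σ c.G d.G
  comm_fext : ∀ k, α (c.fext k) = d.fext k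
  comm_fint : ∀ j, iso.hom.onV (c.fint j) = d.fint (α j)
  comm_gext : ∀ k, γ (c.gext k) = d.gext k
  comm_gint : ∀ j, iso.hom.onV (c.gint j) = d.gint (γ j)
  α_order : ∀ j j', c.SRel j j' → j ≤ j' → α j ≤ α j'
  γ_order : ∀ j j', c.TRel j j' → j ≤ j' → γ j ≤ γ j'

/-- A cospan of plain hypergraphs regarded as an extended cospan of e-hypergraphs with
identity-like external legs. -/
def HCospan.toE {σ : MSig} {n m : ℕ} (c : HCospan σ n m) : ECospan σ n m where
  G := c.G.toE
  ni := n
  mi := m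
  fext := id
  fint := c.i
  gext := id
  gint := c.o
  fext_inj := fun _ _ h => h
  gext_inj := fun _ _ h => h
  ext_in_top := fun _ => rfl
  ext_out_top := fun _ => rfl
  strict_in_not_top := fun j h => absurd rfl (h j)
  strict_out_not_top := fun j h => absurd rfl (h j)

def HypHom.toE {σ : MSig} {G H : Hyp σ} (f : HypHom σ G H) : EHypHom σ G.toE H.toE where
  onV := f.onV
  onE := f.onE
  map_src := f.map_src
  map_tgt := f.map_tgt
  map_lbl := fun e => by simp [Hyp.toE, f.map_lbl]; exact f.map_lbl e
  map_parent := by intro x e h; cases h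
  map_cons := by intro x y h; cases h

def EHypHom.ofE {σ : MSig} {G H : Hyp σ} (f : EHypHom σ G.toE H.toE) : HypHom σ G H where
  onV := f.onV
  onE := f.onE
  map_src := f.map_src
  map_tgt := f.map_tgt
  map_lbl := fun e => by
    have := f.map_lbl e
    simpa [Hyp.toE] using this

/-- **Embedding of `HypI(σ)` into `EHypI(σ)`.**  Two cospans `n → G ← m` and `n → G' ← m` of
plain hypergraphs are isomorphic as cospans if and only if the corresponding extended cospans
`n → n → G ← m ← m` (with identity-like external legs, and with the carriers regarded as
e-hypergraphs with empty child and consistency relations) are isomorphic as extended cospans.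
Consequently, the induced identity-on-objects functor `E : HypI(σ) → EHypI(σ)` (acting on
isomorphism classes) is well defined and faithful. -/
theorem HCospan.iso_iff_toE_iso {σ : MSig} {n m : ℕ} (c d : HCospan σ n m) :
    HCospanIso c d ↔ Nonempty (ECospanIso c.toE d.toE) := by
  constructor
  · rintro ⟨φ, hi, ho⟩
    exact ⟨{
      α := Equiv.refl _
      γ := Equiv.refl _
      iso := ⟨φ.hom.toE, φ.inv.toE, φ.left_V, φ.right_V, φ.left_E, φ.right_E⟩
      comm_fext := fun k => rfl
      comm_fint := hi
      comm_gext := fun k => rfl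
      comm_gint := ho
      α_order := fun j j' _ h => h
      γ_order := fun j j' _ h => h }⟩
  · rintro ⟨e⟩
    refine ⟨⟨e.iso.hom.ofE, e.iso.inv.ofE, e.iso.left_V, e.iso.right_V,
      e.iso.left_E, e.iso.right_E⟩, ?_, ?_⟩
    · intro k
      have h := e.comm_fint k
      have h2 := e.comm_fext k
      simp [HCospan.toE] at h h2
      show e.iso.hom.onV (c.i k) = d.i k
      rw [h, h2]
    · intro k
      have h := e.comm_gint k
      have h2 := e.comm_gext k
      simp [HCospan.toE] at h h2
      show e.iso.hom.onV (c.o k) = d.o k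
      rw [h, h2]
end
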